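/- arXiv:0909.4887 — 8 statements merged into one kernel-verified Lean document; each statement's English description precedes it below -/
import Mathlib

section
/- If n point masses with positive masses at pairwise distinct positions in ℝ³ form a central configuration, then for all pairwise distinct indices i, j, h one has ∑_{k ∉ {i,j,h}} m_k (R_{ik} − R_{jk}) Δ_{ijhk} = 0, where Δ_{ijhk} = det(qᵢ − qⱼ, qⱼ − q_h, q_h − q_k). -/
noncomputable section

open Finset

/-- Euclidean 3-space. -/
abbrev E3 : Type := EuclideanSpace ℝ (Fin 3)

/-- Determinant of three vectors in `ℝ³`. -/
def det3 (u v w : E3) : ℝ :=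
  Matrix.det !![u 0, u 1, u 2; v 0, v 1, v 2; w 0, w 1, w 2]

/-- The oriented volume `Δ_{ijhk} = det(qᵢ − qⱼ, qⱼ − q_h, q_h − q_k)`
(0-based indices: body `i+1` of the paper is index `i`). -/
def Delta {n : ℕ} (q : Fin n → E3) (i j h k : Fin n) : ℝ :=
  det3 (q i - q j) (q j - q h) (q h - q k)

/-- The unsigned volume `D_{ijhk} = |Δ_{ijhk}|`. -/
def Dvol {n : ℕ} (q : Fin n → E3) (i j h k : Fin n) : ℝ := |Delta q i j h k|

/-- `R_{ij} = ‖qᵢ − qⱼ‖⁻³`. -/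
def Rinv {n d : ℕ} (q : Fin n → EuclideanSpace ℝ (Fin d)) (i j : Fin n) : ℝ :=
  (‖q i - q j‖ ^ 3)⁻¹

/-- The `n` bodies with masses `m` at positions `q` in `ℝ^d` form a central configuration:
there is `λ ∈ ℝ` with `∑_{k ≠ i} m_k R_{ik} (qᵢ − q_k) = λ (qᵢ − q_G)` for every `i`,
where `q_G` is the center of mass. -/
def IsCentralConfig {n d : ℕ} (m : Fin n → ℝ) (q : Fin n → EuclideanSpace ℝ (Fin d)) : Prop :=
  ∃ lam : ℝ, ∀ i : Fin n,
    ∑ k ∈ Finset.univ.erase i, (m k * Rinv q i k) • (q i - q k)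
      = lam • (q i - (∑ j, m j)⁻¹ • ∑ j, m j • q j)

/-- Seven points in `ℝ³` (0-based indices) form a symmetric configuration:
`r₁₂=r₁₃=r₂₃=r₁₄=r₂₄=r₃₄=1`, `r₁₅=r₂₆=r₃₇`, `r₄₅=r₄₆=r₄₇`, `r₅₆=r₆₇=r₅₇`,
`r₁₆=r₁₇=r₂₅=r₂₇=r₃₅=r₃₆`, and there is a rotation (isometry) of order 3 mapping
`q₁→q₂→q₃→q₁`, `q₅→q₆→q₇→q₅` and fixing `q₄`. -/
def IsSymmetricConfig (q : Fin 7 → E3) : Prop :=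
  dist (q 0) (q 1) = 1 ∧ dist (q 0) (q 2) = 1 ∧ dist (q 1) (q 2) = 1 ∧
  dist (q 0) (q 3) = 1 ∧ dist (q 1) (q 3) = 1 ∧ dist (q 2) (q 3) = 1 ∧
  dist (q 0) (q 4) = dist (q 1) (q 5) ∧ dist (q 1) (q 5) = dist (q 2) (q 6) ∧
  dist (q 3) (q 4) = dist (q 3) (q 5) ∧ dist (q 3) (q 5) = dist (q 3) (q 6) ∧
  dist (q 4) (q 5) = dist (q 5) (q 6) ∧ dist (q 5) (q 6) = dist (q 4) (q 6) ∧
  dist (q 0) (q 5) = dist (q 0) (q 6) ∧ dist (q 0) (q 6) = dist (q 1) (q 4) ∧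
  dist (q 1) (q 4) = dist (q 1) (q 6) ∧ dist (q 1) (q 6) = dist (q 2) (q 4) ∧
  dist (q 2) (q 4) = dist (q 2) (q 5) ∧
  ∃ ρ : E3 ≃ᵢ E3, ρ.trans (ρ.trans ρ) = IsometryEquiv.refl E3 ∧
    ρ (q 0) = q 1 ∧ ρ (q 1) = q 2 ∧ ρ (q 2) = q 0 ∧
    ρ (q 4) = q 5 ∧ ρ (q 5) = q 6 ∧ ρ (q 6) = q 4 ∧ ρ (q 3) = q 3

/-- `H = (R₁₅ − R₄₅) D₁₄₅₆ − (R₄₅ − R₁₆) D₁₄₆₇`. -/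
def Hval (q : Fin 7 → E3) : ℝ :=
  (Rinv q 0 4 - Rinv q 3 4) * Dvol q 0 3 4 5 - (Rinv q 3 4 - Rinv q 0 5) * Dvol q 0 3 5 6

/-- A symmetric configuration is in `Ω` if `r₁₅ ∈ (0, √6/4)`, `Δ₁₄₅₇ ≤ 0` and
`1 > r₁₆ > r₄₅ > r₁₅`. -/
def InOmega (q : Fin 7 → E3) : Prop :=
  IsSymmetricConfig q ∧
  0 < dist (q 0) (q 4) ∧ dist (q 0) (q 4) < Real.sqrt 6 / 4 ∧
  Delta q 0 3 4 6 ≤ 0 ∧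
  dist (q 0) (q 5) < 1 ∧ dist (q 3) (q 4) < dist (q 0) (q 5) ∧
  dist (q 0) (q 4) < dist (q 3) (q 4)

/-- `Ω_H` is the subset of `Ω` where `H = 0`. -/
def InOmegaH (q : Fin 7 → E3) : Prop := InOmega q ∧ Hval q = 0

/-- `f_{ijh} = ∑_{k ∉ {i,j,h}} m_k (R_{ik} − R_{jk}) Δ_{ijhk}`. -/
def fval (m : Fin 7 → ℝ) (q : Fin 7 → E3) (i j h : Fin 7) : ℝ :=
  ∑ k ∈ Finset.univ \ {i, j, h}, m k * (Rinv q i k - Rinv q j k) * Delta q i j h k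

/-- `g(s₁₅, s₁₆, s₄₅)`. -/
def gfun (s15 s16 s45 : ℝ) : ℝ :=
  -3 + 2*s15 - 3*s15^2 + 4*s16 + 4*s15*s16 - 4*s16^2 + 2*s45 + 2*s15*s45 + 4*s16*s45 - 3*s45^2

/-- Area of the triangle with vertices `a`, `b`, `c` in `ℝ³`, via the cross product. -/
def triArea (a b c : E3) : ℝ :=
  ‖(WithLp.equiv 2 (Fin 3 → ℝ)).symm
    (crossProduct ((WithLp.equiv 2 (Fin 3 → ℝ)) (b - a)) ((WithLp.equiv 2 (Fin 3 → ℝ)) (c - a)))‖ / 2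


namespace Statement2Aux

lemma det3_zero (u v : E3) : det3 u v 0 = 0 := by
  simp [det3, Matrix.det_fin_three]

lemma det3_add_left (u v w : E3) : det3 u v (u + w) = det3 u v w := by
  simp [det3, Matrix.det_fin_three, PiLp.add_apply, PiLp.smul_apply, smul_eq_mul]
  ring

lemma det3_add_mid (u v w : E3) : det3 u v (v + w) = det3 u v w := by
  simp [det3, Matrix.det_fin_three, PiLp.add_apply, PiLp.smul_apply, smul_eq_mul]
  ring

/-- `det3 u v ·` as a linear map. -/
def detLM (u v : E3) : E3 →ₗ[ℝ] ℝ where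
  toFun x := det3 u v x
  map_add' x y := by
    simp [det3, Matrix.det_fin_three, PiLp.add_apply, PiLp.smul_apply, smul_eq_mul]
    ring
  map_smul' c x := by
    simp [det3, Matrix.det_fin_three, PiLp.add_apply, PiLp.smul_apply, smul_eq_mul]
    ring

@[simp] lemma detLM_apply (u v x : E3) : detLM u v x = det3 u v x := rfl

end Statement2Aux

open Statement2Aux in
/-- If `n` bodies with positive masses at pairwise distinct positions in `ℝ³` form a
central configuration, then for all pairwise distinct `i, j, h`:
`∑_{k ∉ {i,j,h}} m_k (R_{ik} − R_{jk}) Δ_{ijhk} = 0`. -/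

theorem statement2 (n : ℕ) (m : Fin n → ℝ) (q : Fin n → E3)
    (hm : ∀ i, 0 < m i) (hq : Function.Injective q)
    (hcc : IsCentralConfig m q)
    (i j h : Fin n) (hij : i ≠ j) (hih : i ≠ h) (hjh : j ≠ h) :
    ∑ k ∈ Finset.univ \ {i, j, h},
      m k * (Rinv q i k - Rinv q j k) * Delta q i j h k = 0 := by
  classical
  obtain ⟨lam, hl⟩ := hcc
  set u := q i - q j with hu
  set v := q j - q h with hv
  set c : E3 := (∑ j, m j)⁻¹ • ∑ j, m j • q j with hc
  have hkey_i : ∀ k, det3 u v (q i - q k) = Delta q i j h k := by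
    intro k
    have e : q i - q k = u + (v + (q h - q k)) := by rw [hu, hv]; abel
    rw [e, det3_add_left, det3_add_mid]; rfl
  have hkey_j : ∀ k, det3 u v (q j - q k) = Delta q i j h k := by
    intro k
    have e : q j - q k = v + (q h - q k) := by rw [hv]; abel
    rw [e, det3_add_mid]; rfl
  have hDi : Delta q i j h i = 0 := by
    rw [← hkey_i i, sub_self, det3_zero]
  have hDj : Delta q i j h j = 0 := by
    rw [← hkey_j j, sub_self, det3_zero]
  have hDh : Delta q i j h h = 0 := by
    show det3 u v (q h - q h) = 0
    rw [sub_self, det3_zero]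
  have h0 : det3 u v u = 0 := by
    have := det3_add_left u v 0
    rw [add_zero, det3_zero] at this
    exact this
  -- apply the linear functional to the two central-configuration equations
  have Hi := congrArg (detLM u v) (hl i)
  have Hj := congrArg (detLM u v) (hl j)
  simp only [map_sum, map_smul, smul_eq_mul, detLM_apply] at Hi Hj
  simp only [hkey_i] at Hi
  simp only [hkey_j] at Hj
  have hsub : det3 u v (q i - c) - det3 u v (q j - c) = det3 u v u := by
    have hms := (detLM u v).map_sub (q i - c) (q j - c)
    simp only [detLM_apply] at hms
    rw [← hms]
    congr 1
    rw [hu]; abel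
  have Hij : (∑ k ∈ Finset.univ.erase i, m k * Rinv q i k * Delta q i j h k)
      - (∑ k ∈ Finset.univ.erase j, m k * Rinv q j k * Delta q i j h k) = 0 := by
    rw [Hi, Hj]
    have hAB : det3 u v (q i - c) = det3 u v (q j - c) := by
      have := hsub; rw [h0] at this; linarith
    rw [hAB]; ring
  set S : Finset (Fin n) := Finset.univ \ {i, j, h} with hS
  have hmemS : ∀ k, k ∈ S ↔ (k ≠ i ∧ k ≠ j ∧ k ≠ h) := by
    intro k
    simp [hS, not_or]
  have e1 : ∑ k ∈ S, m k * Rinv q i k * Delta q i j h k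
      = ∑ k ∈ Finset.univ.erase i, m k * Rinv q i k * Delta q i j h k := by
    apply Finset.sum_subset
    · intro k hk
      rcases (hmemS k).mp hk with ⟨h1, _, _⟩
      simp [h1]
    · intro k hk hk'
      have hki : k ≠ i := (Finset.mem_erase.mp hk).1
      have : k = j ∨ k = h := by
        by_contra hcon
        push_neg at hcon
        exact hk' ((hmemS k).mpr ⟨hki, hcon.1, hcon.2⟩)
      rcases this with rfl | rfl
      · rw [hDj]; ring
      · rw [hDh]; ring
  have e2 : ∑ k ∈ S, m k * Rinv q j k * Delta q i j h k
      = ∑ k ∈ Finset.univ.erase j, m k * Rinv q j k * Delta q i j h k := by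
    apply Finset.sum_subset
    · intro k hk
      rcases (hmemS k).mp hk with ⟨_, h2, _⟩
      simp [h2]
    · intro k hk hk'
      have hkj : k ≠ j := (Finset.mem_erase.mp hk).1
      have : k = i ∨ k = h := by
        by_contra hcon
        push_neg at hcon
        exact hk' ((hmemS k).mpr ⟨hcon.1, hkj, hcon.2⟩)
      rcases this with rfl | rfl
      · rw [hDi]; ring
      · rw [hDh]; ring
  calc ∑ k ∈ Finset.univ \ {i, j, h}, m k * (Rinv q i k - Rinv q j k) * Delta q i j h k
      = (∑ k ∈ S, m k * Rinv q i k * Delta q i j h k)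
        - ∑ k ∈ S, m k * Rinv q j k * Delta q i j h k := by
        rw [← Finset.sum_sub_distrib]
        exact Finset.sum_congr rfl fun k _ => by ring
    _ = 0 := by rw [e1, e2, Hij]
end
end

section
/- If n point masses with positive masses at pairwise distinct positions in ℝ^d form a central configuration, then for all pairwise distinct indices i₁, i₂, …, i_d one has ∑_{k ∉ {i₁,…,i_d}} m_k (R_{i₁k} − R_{i₂k}) Δ_{i₁,i₂,…,i_d,k} = 0, where Δ_{i₁,i₂,…,i_d,k} = det(q_{i₁} − q_{i₂}, q_{i₂} − q_{i₃}, …, q_{i_{d−1}} − q_{i_d}, q_{i_d} − q_k) is d! times the signed volume of the d-dimensional simplex with vertices q_{i₁},…,q_{i_d}, q_k. -/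
noncomputable section

open Finset

set_option maxHeartbeats 1000000

/-- If `n` bodies with positive masses at pairwise distinct positions in `ℝ^d` form a
central configuration, then for all pairwise distinct indices `i₁, …, i_d`:
`∑_{k ∉ {i₁,…,i_d}} m_k (R_{i₁k} − R_{i₂k}) Δ_{i₁,…,i_d,k} = 0`, where
`Δ_{i₁,…,i_d,k} = det(q_{i₁} − q_{i₂}, …, q_{i_{d−1}} − q_{i_d}, q_{i_d} − q_k)`. -/
theorem statement3 (n d : ℕ) (hd : 2 ≤ d)
    (m : Fin n → ℝ) (q : Fin n → EuclideanSpace ℝ (Fin d))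
    (hm : ∀ i, 0 < m i) (hq : Function.Injective q)
    (hcc : IsCentralConfig m q)
    (ι : Fin d → Fin n) (hι : Function.Injective ι) :
    ∑ k ∈ Finset.univ \ Finset.image ι Finset.univ,
      m k * (Rinv q (ι ⟨0, by omega⟩) k - Rinv q (ι ⟨1, by omega⟩) k) *
        Matrix.det (Matrix.of fun (a b : Fin d) =>
          if hab : (a : ℕ) + 1 < d then (q (ι a) - q (ι ⟨(a : ℕ) + 1, hab⟩)) b
          else (q (ι a) - q k) b) = 0 := by
  classical
  obtain ⟨lam, heq⟩ := hcc
  set last : Fin d := ⟨d - 1, by omega⟩ with hlast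
  set i₀ : Fin n := ι ⟨0, by omega⟩ with hi0
  set i₁ : Fin n := ι ⟨1, by omega⟩ with hi1
  set G : EuclideanSpace ℝ (Fin d) := (∑ j, m j)⁻¹ • ∑ j, m j • q j with hG
  set rows : Fin d → Fin d → ℝ := fun a b =>
    if h : (a : ℕ) + 1 < d then (q (ι a) - q (ι ⟨(a : ℕ) + 1, h⟩)) b
    else 0 with hrows
  set L : EuclideanSpace ℝ (Fin d) →ₗ[ℝ] ℝ :=
    { toFun := fun x =>
        ((Matrix.of rows).updateRow last ((WithLp.equiv 2 (Fin d → ℝ)) x)).det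
      map_add' := by
        intro x y
        simp [Matrix.det_updateRow_add]
      map_smul' := by
        intro c x
        simp [Matrix.det_updateRow_smul] } with hL
  have hrow0 : ∀ a : Fin d, ∀ h : (a : ℕ) + 1 < d,
      L (q (ι a) - q (ι ⟨(a : ℕ) + 1, h⟩)) = 0 := by
    intro a h
    have hane : a ≠ last := by
      intro hc
      rw [hc] at h
      simp only [hlast] at h
      omega
    refine Matrix.det_zero_of_row_eq (M := (Matrix.of rows).updateRow last
      ((WithLp.equiv 2 (Fin d → ℝ)) (q (ι a) - q (ι ⟨(a : ℕ) + 1, h⟩)))) (i := last) (j := a)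
      (Ne.symm hane) ?_
    rw [Matrix.updateRow_self, Matrix.updateRow_ne hane]
    funext b
    show _ = Matrix.of rows a b
    simp only [Matrix.of_apply, hrows]
    rw [dif_pos h]
    rfl
  have hB : ∀ t : ℕ, ∀ a : Fin d, d - 1 - (a : ℕ) ≤ t → L (q (ι a) - q (ι last)) = 0 := by
    intro t
    induction t with
    | zero =>
      intro a ha
      have : a = last := by
        apply Fin.ext
        show (a : ℕ) = d - 1
        have := a.isLt
        omega
      rw [this, sub_self, map_zero]
    | succ t ih =>
      intro a ha
      by_cases hal : a = last
      · rw [hal, sub_self, map_zero]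
      · have h : (a : ℕ) + 1 < d := by
          have h1 : (a : ℕ) < d := a.isLt
          have h2 : (a : ℕ) ≠ d - 1 := fun hc => hal (Fin.ext hc)
          omega
        have hsplit : q (ι a) - q (ι last)
            = (q (ι a) - q (ι ⟨(a : ℕ) + 1, h⟩)) + (q (ι ⟨(a : ℕ) + 1, h⟩) - q (ι last)) := by
          abel
        rw [hsplit, map_add, hrow0 a h, zero_add]
        exact ih ⟨(a : ℕ) + 1, h⟩ (by show d - 1 - ((a : ℕ) + 1) ≤ t; omega)
  have hA : ∀ a b : Fin d, L (q (ι a) - q (ι b)) = 0 := by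
    intro a b
    have hsplit : q (ι a) - q (ι b)
        = (q (ι a) - q (ι last)) - (q (ι b) - q (ι last)) := by abel
    rw [hsplit, map_sub, hB (d - 1 - (a : ℕ)) a le_rfl, hB (d - 1 - (b : ℕ)) b le_rfl, sub_self]
  set D : Fin n → ℝ := fun k => L (q (ι last) - q k) with hD
  have hD0 : ∀ j : Fin d, D (ι j) = 0 := by
    intro j
    rw [hD]
    exact hA last j
  have hL0 : ∀ k, L (q i₀ - q k) = D k := by
    intro k
    have : q i₀ - q k = (q i₀ - q (ι last)) + (q (ι last) - q k) := by abel
    rw [this, map_add, hA, zero_add]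
  have hL1 : ∀ k, L (q i₁ - q k) = D k := by
    intro k
    have : q i₁ - q k = (q i₁ - q (ι last)) + (q (ι last) - q k) := by abel
    rw [this, map_add, hA, zero_add]
  have hDet : ∀ k : Fin n,
      Matrix.det (Matrix.of fun (a b : Fin d) =>
        if hab : (a : ℕ) + 1 < d then (q (ι a) - q (ι ⟨(a : ℕ) + 1, hab⟩)) b
        else (q (ι a) - q k) b) = D k := by
    intro k
    have hmat : (Matrix.of fun (a b : Fin d) =>
        if hab : (a : ℕ) + 1 < d then (q (ι a) - q (ι ⟨(a : ℕ) + 1, hab⟩)) b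
        else (q (ι a) - q k) b)
        = (Matrix.of rows).updateRow last ((WithLp.equiv 2 (Fin d → ℝ)) (q (ι last) - q k)) := by
      ext a b
      by_cases hal : a = last
      · have hnlt : ¬ (((last : Fin d) : ℕ) + 1 < d) := by
          show ¬ (d - 1 + 1 < d); omega
        rw [hal, Matrix.updateRow_self]
        exact dif_neg hnlt
      · have h : (a : ℕ) + 1 < d := by
          have h1 : (a : ℕ) < d := a.isLt
          have h2 : (a : ℕ) ≠ d - 1 := fun hc => hal (Fin.ext hc)
          omega
        rw [Matrix.updateRow_ne hal]
        show _ = Matrix.of rows a b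
        simp only [Matrix.of_apply, hrows]
        rw [dif_pos h, dif_pos h]
    rw [hmat, hD]
    simp only [hL, LinearMap.coe_mk, AddHom.coe_mk]
  have E0 := congrArg L (heq i₀)
  have E1 := congrArg L (heq i₁)
  rw [map_sum, map_smul] at E0 E1
  simp only [map_smul, smul_eq_mul] at E0 E1
  simp only [hL0] at E0
  simp only [hL1] at E1
  have hRHS : lam * L (q i₀ - G) = lam * L (q i₁ - G) := by
    have hsub : (q i₀ - G) - (q i₁ - G) = q i₀ - q i₁ := by abel
    have h0 : L (q i₀ - G) - L (q i₁ - G) = 0 := by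
      rw [← map_sub, hsub]
      exact hA ⟨0, by omega⟩ ⟨1, by omega⟩
    have h2 : L (q i₀ - G) = L (q i₁ - G) := by linarith
    rw [h2]
  set S : Finset (Fin n) := Finset.univ \ Finset.image ι Finset.univ with hS
  have hsum0 : ∑ k ∈ Finset.univ.erase i₀, m k * Rinv q i₀ k * D k
      = ∑ k ∈ S, m k * Rinv q i₀ k * D k := by
    refine (Finset.sum_subset ?_ ?_).symm
    · intro k hk
      rw [hS, Finset.mem_sdiff] at hk
      refine Finset.mem_erase.2 ⟨?_, Finset.mem_univ k⟩
      intro hc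
      exact hk.2 (by rw [hc, hi0]; exact Finset.mem_image_of_mem ι (Finset.mem_univ _))
    · intro k _ hk
      rw [hS, Finset.mem_sdiff] at hk
      push_neg at hk
      obtain ⟨j, _, hj⟩ := Finset.mem_image.1 (hk (Finset.mem_univ k))
      rw [← hj, hD0, mul_zero]
  have hsum1 : ∑ k ∈ Finset.univ.erase i₁, m k * Rinv q i₁ k * D k
      = ∑ k ∈ S, m k * Rinv q i₁ k * D k := by
    refine (Finset.sum_subset ?_ ?_).symm
    · intro k hk
      rw [hS, Finset.mem_sdiff] at hk
      refine Finset.mem_erase.2 ⟨?_, Finset.mem_univ k⟩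
      intro hc
      exact hk.2 (by rw [hc, hi1]; exact Finset.mem_image_of_mem ι (Finset.mem_univ _))
    · intro k _ hk
      rw [hS, Finset.mem_sdiff] at hk
      push_neg at hk
      obtain ⟨j, _, hj⟩ := Finset.mem_image.1 (hk (Finset.mem_univ k))
      rw [← hj, hD0, mul_zero]
  calc ∑ k ∈ S, m k * (Rinv q i₀ k - Rinv q i₁ k) *
        Matrix.det (Matrix.of fun (a b : Fin d) =>
          if hab : (a : ℕ) + 1 < d then (q (ι a) - q (ι ⟨(a : ℕ) + 1, hab⟩)) b
          else (q (ι a) - q k) b)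
      = ∑ k ∈ S, (m k * Rinv q i₀ k * D k - m k * Rinv q i₁ k * D k) := by
        refine Finset.sum_congr rfl fun k _ => ?_
        rw [hDet k]; ring
    _ = ∑ k ∈ S, m k * Rinv q i₀ k * D k - ∑ k ∈ S, m k * Rinv q i₁ k * D k :=
        Finset.sum_sub_distrib _ _
    _ = 0 := by
        rw [← hsum0, ← hsum1, E0, E1, hRHS, sub_self]
end
end

section
/- Let q₁,…,q₇ in ℝ³ be a symmetric configuration with r₁₆ > r₁₅. Then the points q₁, q₅, q₆, q₂ form an isosceles trapezoid and r₅₆ = r₁₆² − r₁₅². -/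
noncomputable section

open Finset

open RealInnerProductSpace in
private lemma orth_pair {a b x : E3} (h1 : ⟪a, x⟫ = 0) (h2 : ⟪b, x⟫ = 0) :
    x ∈ (Submodule.span ℝ (Set.range ![a, b]))ᗮ := by
  rw [Submodule.mem_orthogonal]
  intro u hu
  induction hu using Submodule.span_induction with
  | mem y hy =>
    obtain ⟨i, rfl⟩ := hy
    fin_cases i
    · exact h1
    · exact h2
  | zero => simp
  | add y z _ _ hy hz => rw [inner_add_left, hy, hz, add_zero]
  | smul c y _ hy => rw [inner_smul_left, hy, mul_zero]

private lemma cube_root_one {c : ℝ} (h : c^3 = 1) : c = 1 := by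
  have h0 : (c - 1) * ((c + 1/2)^2 + 3/4) = 0 := by linear_combination h
  have h1 : (0:ℝ) < (c + 1/2)^2 + 3/4 := by positivity
  rcases mul_eq_zero.mp h0 with h | h
  · linarith
  · linarith

open RealInnerProductSpace in
/-- In a symmetric configuration with `r₁₆ > r₁₅`, the points `q₁, q₅, q₆, q₂` form
an isosceles trapezoid (the sides `q₅q₆` and `q₁q₂` are parallel, the legs `q₁q₅`, `q₂q₆` are
equal, and the diagonals `q₁q₆`, `q₅q₂` are equal), and `r₅₆ = r₁₆² − r₁₅²`. -/
theorem statement5 (q : Fin 7 → E3) (hsym : IsSymmetricConfig q)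
    (h : dist (q 0) (q 4) < dist (q 0) (q 5)) :
    (∃ t : ℝ, q 5 - q 4 = t • (q 1 - q 0)) ∧
    dist (q 0) (q 4) = dist (q 1) (q 5) ∧
    dist (q 0) (q 5) = dist (q 1) (q 4) ∧
    dist (q 4) (q 5) = dist (q 0) (q 5) ^ 2 - dist (q 0) (q 4) ^ 2 := by
  obtain ⟨h01, h02, h12, h03, h13, h23, e1, e2, e3, e4, e5, e6, e7, e8, e9, e10, e11,
    ρ, hρ3, hρ0, hρ1, hρ2, hρ4, hρ5, hρ6, hρfix⟩ := hsym
  set L := ρ.toRealLinearIsometryEquiv with hLdef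
  have hL : ∀ x y : E3, L (x - y) = ρ x - ρ y := by
    intro x y
    rw [map_sub, ρ.toRealLinearIsometryEquiv_apply x, ρ.toRealLinearIsometryEquiv_apply y]
    abel
  have hρid : ∀ x, ρ (ρ (ρ x)) = x := by
    intro x
    have := congrArg (fun e : E3 ≃ᵢ E3 => e x) hρ3
    exact this
  have hL3 : ∀ x : E3, L (L (L x)) = x := by
    intro x
    have h1 : L x = ρ x - ρ 0 := ρ.toRealLinearIsometryEquiv_apply x
    rw [h1, hL, hL, hρid, hρid, sub_zero]
  -- vectors
  set a : E3 := q 1 - q 0 with ha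
  set a2 : E3 := q 2 - q 1 with ha2
  set u : E3 := q 4 - q 0 with hu
  set v : E3 := q 5 - q 1 with hv
  have hLa : L a = a2 := by rw [ha, hL, hρ0, hρ1]
  have hLa2 : L a2 = -a - a2 := by rw [ha2, hL, hρ1, hρ2, ha]; abel
  have hLu : L u = v := by rw [hu, hv, hL, hρ0, hρ4]
  -- distances
  set r : ℝ := dist (q 0) (q 4) with hr
  set R : ℝ := dist (q 0) (q 5) with hR
  have hr0 : 0 ≤ r := dist_nonneg
  have hrR : r < R := h
  -- norms
  have hna : ‖a‖ = 1 := by rw [ha, ← dist_eq_norm, dist_comm]; exact h01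
  have hna2 : ‖a2‖ = 1 := by rw [ha2, ← dist_eq_norm, dist_comm]; exact h12
  have hnu : ‖u‖ = r := by rw [hu, ← dist_eq_norm, dist_comm]
  have hnv : ‖v‖ = r := by rw [hv, ← dist_eq_norm, dist_comm]; exact e1.symm
  have hnau : ‖a - u‖ = R := by
    have : a - u = q 1 - q 4 := by rw [ha, hu]; abel
    rw [this, ← dist_eq_norm]; exact (e7.trans e8).symm
  have hnav : ‖a + v‖ = R := by
    have : a + v = q 5 - q 0 := by rw [ha, hv]; abel
    rw [this, ← dist_eq_norm, dist_comm]
  have hnaa2 : ‖a + a2‖ = 1 := by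
    have : a + a2 = q 2 - q 0 := by rw [ha, ha2]; abel
    rw [this, ← dist_eq_norm, dist_comm]; exact h02
  have hnaa2u : ‖a + a2 - u‖ = R := by
    have : a + a2 - u = q 2 - q 4 := by rw [ha, ha2, hu]; abel
    rw [this, ← dist_eq_norm]; exact ((e7.trans e8).trans (e9.trans e10)).symm
  -- inner products
  have iaa : ⟪a, a⟫ = 1 := by rw [real_inner_self_eq_norm_sq, hna]; norm_num
  have ia2a2 : ⟪a2, a2⟫ = 1 := by rw [real_inner_self_eq_norm_sq, hna2]; norm_num
  have iuu : ⟪u, u⟫ = r^2 := by rw [real_inner_self_eq_norm_sq, hnu]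
  have ivv : ⟪v, v⟫ = r^2 := by rw [real_inner_self_eq_norm_sq, hnv]
  have iaa2 : ⟪a, a2⟫ = -(1/2) := by
    have hx : ‖a + a2‖^2 = ‖a‖^2 + 2*⟪a, a2⟫ + ‖a2‖^2 := norm_add_sq_real a a2
    rw [hnaa2, hna, hna2] at hx; linarith
  have iau : ⟪a, u⟫ = (1 + r^2 - R^2)/2 := by
    have hx : ‖a - u‖^2 = ‖a‖^2 - 2*⟪a, u⟫ + ‖u‖^2 := norm_sub_sq_real a u
    rw [hnau, hna, hnu] at hx; linarith
  have iav : ⟪a, v⟫ = (R^2 - 1 - r^2)/2 := by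
    have hx : ‖a + v‖^2 = ‖a‖^2 + 2*⟪a, v⟫ + ‖v‖^2 := norm_add_sq_real a v
    rw [hnav, hna, hnv] at hx; linarith
  have ia2u : ⟪a2, u⟫ = 0 := by
    have hx : ‖a + a2 - u‖^2 = ‖a + a2‖^2 - 2*⟪a + a2, u⟫ + ‖u‖^2 := norm_sub_sq_real (a + a2) u
    rw [hnaa2u, hnaa2, hnu, inner_add_left, iau] at hx; linarith
  have ia2v : ⟪a2, v⟫ = (1 + r^2 - R^2)/2 := by
    rw [← hLa, ← hLu, LinearIsometryEquiv.inner_map_map]; exact iau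
  -- linear independence and the orthogonal complement
  have hli : LinearIndependent ℝ ![a, a2] := by
    rw [LinearIndependent.pair_iff]
    intro s t hst
    have h1 : ⟪a, s • a + t • a2⟫ = 0 := by rw [hst, inner_zero_right]
    have h2 : ⟪a2, s • a + t • a2⟫ = 0 := by rw [hst, inner_zero_right]
    rw [inner_add_right, real_inner_smul_right, real_inner_smul_right, iaa, iaa2] at h1
    have hcm : ⟪a2, a⟫ = ⟪a, a2⟫ := real_inner_comm a a2
    rw [inner_add_right, real_inner_smul_right, real_inner_smul_right] at h2
    rw [hcm, iaa2, ia2a2] at h2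
    constructor <;> linarith
  set S : Submodule ℝ E3 := Submodule.span ℝ (Set.range ![a, a2]) with hS
  have haS : a ∈ S := Submodule.subset_span ⟨0, rfl⟩
  have ha2S : a2 ∈ S := Submodule.subset_span ⟨1, rfl⟩
  have hfrS : Module.finrank ℝ S = 2 := by
    rw [hS, finrank_span_eq_card hli]; simp
  have hfrO : Module.finrank ℝ Sᗮ = 1 := by
    have := Submodule.finrank_add_finrank_orthogonal S
    rw [hfrS, finrank_euclideanSpace_fin] at this; omega
  have : Sᗮ ≠ ⊥ := by
    intro hb
    rw [hb] at hfrO; simp at hfrO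
  obtain ⟨f, hfO, hf0⟩ := Submodule.ne_bot_iff _|>.mp this
  have hspan : (Submodule.span ℝ {f}) = Sᗮ := by
    apply Submodule.eq_of_le_of_finrank_eq
    · rw [Submodule.span_le, Set.singleton_subset_iff]; exact hfO
    · rw [finrank_span_singleton hf0, hfrO]
  have ifa : ⟪a, f⟫ = 0 := (Submodule.mem_orthogonal S f).mp hfO a haS
  have ifa2 : ⟪a2, f⟫ = 0 := (Submodule.mem_orthogonal S f).mp hfO a2 ha2S
  -- L f = f
  have hLfO : L f ∈ Sᗮ := by
    have i2 : ⟪a2, L f⟫ = 0 := by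
      rw [← hLa, LinearIsometryEquiv.inner_map_map]; exact ifa
    have i1 : ⟪a, L f⟫ = 0 := by
      have := hLa2 ▸ LinearIsometryEquiv.inner_map_map L a2 f
      rw [inner_sub_left, inner_neg_left, i2, ifa2] at this
      linarith
    rw [hS]; exact orth_pair i1 i2
  obtain ⟨c, hc⟩ := (Submodule.mem_span_singleton).mp (hspan ▸ hLfO)
  have hc3 : c^3 • f = f := by
    have h1 : L (L (L f)) = f := hL3 f
    have e1' : L f = c • f := hc.symm
    have h2 : L (L (L f)) = c • (c • (c • f)) := by
      rw [e1', map_smul, e1', map_smul, map_smul, e1']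
    have hsc : c^3 = c*(c*c) := by ring
    rw [hsc, mul_smul, mul_smul, ← h2, h1]
  have hc1 : c = 1 := by
    apply cube_root_one
    by_contra hne
    exact hf0 (by
      have : (c^3 - 1) • f = 0 := by rw [sub_smul, hc3, one_smul, sub_self]
      exact (smul_eq_zero.mp this).resolve_left (sub_ne_zero.mpr hne))
  have hLf : L f = f := by rw [← hc, hc1, one_smul]
  have ifuv : ⟪f, u⟫ = ⟪f, v⟫ := by
    calc ⟪f, u⟫ = ⟪L f, L u⟫ := (LinearIsometryEquiv.inner_map_map L f u).symm
    _ = ⟪f, v⟫ := by rw [hLf, hLu]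
  -- the main vector identity
  set t : ℝ := R^2 - r^2 with ht
  have hbt : q 5 - q 4 = t • a := by
    have hb : q 5 - q 4 = a + v - u := by rw [ha, hv, hu]; abel
    have hb' : (q 5 - q 4) - t • a ∈ Sᗮ := by
      have i1 : ⟪a, (q 5 - q 4) - t • a⟫ = 0 := by
        simp only [hb, inner_sub_right, inner_add_right, real_inner_smul_right, iaa, iau, iav]
        ring
      have i2 : ⟪a2, (q 5 - q 4) - t • a⟫ = 0 := by
        simp only [hb, inner_sub_right, inner_add_right, real_inner_smul_right,
          real_inner_comm a a2, iaa2, ia2u, ia2v]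
        ring
      rw [hS]; exact orth_pair i1 i2
    obtain ⟨c', hc'⟩ := (Submodule.mem_span_singleton).mp (hspan ▸ hb')
    have i3 : ⟪f, (q 5 - q 4) - t • a⟫ = 0 := by
      simp only [hb, inner_sub_right, inner_add_right, real_inner_smul_right,
        real_inner_comm a f, ifa, ifuv]
      ring
    rw [← hc', real_inner_smul_right] at i3
    have hff : ⟪f, f⟫ ≠ 0 := fun hz => hf0 (inner_self_eq_zero.mp hz)
    have hc'0 : c' = 0 := by
      rcases mul_eq_zero.mp i3 with h' | h'
      · exact h'
      · exact absurd h' hff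
    have : (q 5 - q 4) - t • a = 0 := by rw [← hc', hc'0, zero_smul]
    exact sub_eq_zero.mp this
  refine ⟨⟨t, hbt⟩, e1, e7.trans e8, ?_⟩
  · have hd : dist (q 4) (q 5) = ‖q 5 - q 4‖ := (dist_comm (q 4) (q 5)).trans (dist_eq_norm _ _)
    have hsq : r^2 < R^2 := pow_lt_pow_left₀ hrR hr0 (by norm_num)
    have htnn : 0 ≤ t := by rw [ht]; linarith
    rw [hd, hbt, norm_smul, hna, mul_one, Real.norm_eq_abs, abs_of_nonneg htnn]
end
end

section
/- Let q₁,…,q₅ be points in ℝ³ with ‖qᵢ − qⱼ‖ = 1 for all 1 ≤ i < j ≤ 4, ‖q₂ − q₅‖ = ‖q₃ − q₅‖ = r₁₆, ‖q₁ − q₅‖ = r₁₅ and ‖q₄ − q₅‖ = r₄₅. Then, with s_{ij} = r_{ij}², the relation g(s₁₅, s₁₆, s₄₅) = 0 holds, i.e. −3 + 2s₁₅ − 3s₁₅² + 4s₁₆ + 4s₁₅s₁₆ − 4s₁₆² + 2s₄₅ + 2s₁₅s₄₅ + 4s₁₆s₄₅ − 3s₄₅² = 0. -/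
noncomputable section

open Finset

theorem my_det_fin_four (M : Matrix (Fin 4) (Fin 4) ℝ) :
    M.det =
      M 0 0*M 1 1*M 2 2*M 3 3 - M 0 0*M 1 1*M 2 3*M 3 2 - M 0 0*M 1 2*M 2 1*M 3 3
      + M 0 0*M 1 2*M 2 3*M 3 1 + M 0 0*M 1 3*M 2 1*M 3 2 - M 0 0*M 1 3*M 2 2*M 3 1
      - M 0 1*M 1 0*M 2 2*M 3 3 + M 0 1*M 1 0*M 2 3*M 3 2 + M 0 1*M 1 2*M 2 0*M 3 3
      - M 0 1*M 1 2*M 2 3*M 3 0 - M 0 1*M 1 3*M 2 0*M 3 2 + M 0 1*M 1 3*M 2 2*M 3 0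
      + M 0 2*M 1 0*M 2 1*M 3 3 - M 0 2*M 1 0*M 2 3*M 3 1 - M 0 2*M 1 1*M 2 0*M 3 3
      + M 0 2*M 1 1*M 2 3*M 3 0 + M 0 2*M 1 3*M 2 0*M 3 1 - M 0 2*M 1 3*M 2 1*M 3 0
      - M 0 3*M 1 0*M 2 1*M 3 2 + M 0 3*M 1 0*M 2 2*M 3 1 + M 0 3*M 1 1*M 2 0*M 3 2
      - M 0 3*M 1 1*M 2 2*M 3 0 - M 0 3*M 1 2*M 2 0*M 3 1 + M 0 3*M 1 2*M 2 1*M 3 0 := by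
  rw [Matrix.det_succ_row_zero]
  simp only [Fin.sum_univ_succ, Matrix.det_fin_three, Matrix.submatrix_apply,
    Fin.sum_univ_zero]
  simp [Fin.succAbove, Fin.lt_def]
  ring

/-- Five points in `ℝ³` with `‖qᵢ − qⱼ‖ = 1` for `1 ≤ i < j ≤ 4`,
`‖q₂ − q₅‖ = ‖q₃ − q₅‖ = r₁₆`, `‖q₁ − q₅‖ = r₁₅`, `‖q₄ − q₅‖ = r₄₅` satisfy
`g(r₁₅², r₁₆², r₄₅²) = 0`. -/
theorem statement6 (q : Fin 5 → E3) (r15 r16 r45 : ℝ)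
    (h12 : dist (q 0) (q 1) = 1) (h13 : dist (q 0) (q 2) = 1) (h14 : dist (q 0) (q 3) = 1)
    (h23 : dist (q 1) (q 2) = 1) (h24 : dist (q 1) (q 3) = 1) (h34 : dist (q 2) (q 3) = 1)
    (h25 : dist (q 1) (q 4) = r16) (h35 : dist (q 2) (q 4) = r16)
    (h15 : dist (q 0) (q 4) = r15) (h45 : dist (q 3) (q 4) = r45) :
    gfun (r15 ^ 2) (r16 ^ 2) (r45 ^ 2) = 0 := by
  classical
  set v : Fin 4 → E3 := ![q 1 - q 0, q 2 - q 0, q 3 - q 0, q 4 - q 0] with hv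
  have hnli : ¬ LinearIndependent ℝ v := by
    intro h
    have hc := h.fintype_card_le_finrank
    rw [finrank_euclideanSpace_fin] at hc
    simp at hc
  obtain ⟨c, hsum, i0, hi0⟩ := Fintype.not_linearIndependent_iff.mp hnli
  set G : Matrix (Fin 4) (Fin 4) ℝ := Matrix.of fun i j => (inner ℝ (v i) (v j) : ℝ) with hG
  have hmul : G.mulVec c = 0 := by
    funext i
    have : (G.mulVec c) i = (inner ℝ (v i) (∑ j, c j • v j) : ℝ) := by
      rw [inner_sum]
      simp only [Matrix.mulVec, dotProduct, hG, Matrix.of_apply]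
      exact Finset.sum_congr rfl fun j _ => by rw [real_inner_smul_right]; ring
    rw [Pi.zero_apply, this, hsum, inner_zero_right]
  have hdet : G.det = 0 := by
    rw [← Matrix.exists_mulVec_eq_zero_iff]
    exact ⟨c, fun hc => hi0 (by rw [hc]; rfl), hmul⟩
  have key : ∀ a b : Fin 5, (inner ℝ (q a - q 0) (q b - q 0) : ℝ)
      = (dist (q a) (q 0) ^ 2 + dist (q b) (q 0) ^ 2 - dist (q a) (q b) ^ 2) / 2 := by
    intro a b
    rw [real_inner_eq_norm_mul_self_add_norm_mul_self_sub_norm_sub_mul_self_div_two,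
      sub_sub_sub_cancel_right]
    simp only [dist_eq_norm]
    ring
  rw [my_det_fin_four] at hdet
  simp only [hG, hv, Matrix.of_apply, Matrix.cons_val', Matrix.cons_val_zero,
    Matrix.cons_val_one, Matrix.head_cons, Matrix.cons_val_two, Matrix.tail_cons,
    Matrix.cons_val_three, Matrix.cons_val_fin_one, key] at hdet
  have d1 : dist (q 1) (q 0) = 1 := by rw [dist_comm]; exact h12
  have d2 : dist (q 2) (q 0) = 1 := by rw [dist_comm]; exact h13
  have d3 : dist (q 3) (q 0) = 1 := by rw [dist_comm]; exact h14
  have d4 : dist (q 4) (q 0) = r15 := by rw [dist_comm]; exact h15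
  have e21 : dist (q 2) (q 1) = 1 := by rw [dist_comm]; exact h23
  have e31 : dist (q 3) (q 1) = 1 := by rw [dist_comm]; exact h24
  have e32 : dist (q 3) (q 2) = 1 := by rw [dist_comm]; exact h34
  have e41 : dist (q 4) (q 1) = r16 := by rw [dist_comm]; exact h25
  have e42 : dist (q 4) (q 2) = r16 := by rw [dist_comm]; exact h35
  have e43 : dist (q 4) (q 3) = r45 := by rw [dist_comm]; exact h45
  have dd : dist (q 0) (q 0) = 0 := dist_self _
  simp only [d1, d2, d3, d4, e21, e31, e32, e41, e42, e43, dd, h12, h13, h14, h23, h24,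
    h34, h25, h35, h15, h45, dist_self] at hdet
  unfold gfun
  linear_combination 16 * hdet
end
end

section
/- Let q₁,…,q₇ in ℝ³ be a symmetric configuration with r₁₅ ≠ r₁₆, Δ₁₂₃₅ ≠ 0 and Δ₁₅₆₇ ≠ 0, and suppose positive masses m₁,…,m₇ make it a central configuration. Then m₁ = m₂ = m₃ and m₅ = m₆ = m₇. -/
noncomputable section

open Finset

/-! ### Auxiliary lemmas for statement 7 -/

lemma det3_expand' (u v w : E3) : det3 u v w =
    u 0 * v 1 * w 2 - u 0 * v 2 * w 1 - u 1 * v 0 * w 2 + u 1 * v 2 * w 0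
    + u 2 * v 0 * w 1 - u 2 * v 1 * w 0 := by
  simp [det3, Matrix.det_fin_three]

/-- `det3 u v ·` as a linear map. -/
def det3L (u v : E3) : E3 →ₗ[ℝ] ℝ where
  toFun w := det3 u v w
  map_add' x y := by simp only [det3_expand', PiLp.add_apply]; ring
  map_smul' c x := by
    simp only [det3_expand', PiLp.smul_apply, smul_eq_mul, RingHom.id_apply]; ring

@[simp] lemma det3L_apply (u v w : E3) : det3L u v w = det3 u v w := rfl

lemma det3_sub (u v a b : E3) : det3 u v (a - b) = det3 u v a - det3 u v b := by
  simp only [det3_expand', PiLp.sub_apply]; ring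

lemma det3_self3 (u v : E3) : det3 u v u = 0 := by
  simp only [det3_expand']; ring

lemma Delta_ki {n : ℕ} (q : Fin n → E3) (i j h : Fin n) : Delta q i j h i = 0 := by
  simp only [Delta, det3_expand', PiLp.sub_apply]; ring

lemma Delta_kj {n : ℕ} (q : Fin n → E3) (i j h : Fin n) : Delta q i j h j = 0 := by
  simp only [Delta, det3_expand', PiLp.sub_apply]; ring

lemma Delta_kh {n : ℕ} (q : Fin n → E3) (i j h : Fin n) : Delta q i j h h = 0 := by
  simp only [Delta, det3_expand', PiLp.sub_apply]; ring

lemma Delta_cycl {n : ℕ} (q : Fin n → E3) (i j h k : Fin n) :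
    Delta q j h i k = Delta q i j h k := by
  simp only [Delta, det3_expand', PiLp.sub_apply]; ring

lemma Delta_rot4 {n : ℕ} (q : Fin n → E3) (i j h k : Fin n) :
    Delta q j h k i = - Delta q i j h k := by
  simp only [Delta, det3_expand', PiLp.sub_apply]; ring

lemma det3_neg_delta {n : ℕ} (q : Fin n → E3) (i j h k : Fin n) :
    det3 (q i - q j) (q h - q i) (q i - q k) = - Delta q i j h k := by
  simp only [Delta, det3_expand', PiLp.sub_apply]; ring

/-- Laura–Andoyer type equations for a central configuration of 7 bodies. -/
lemma sum_univ_f {m : Fin 7 → ℝ} {q : Fin 7 → E3} (hcc : IsCentralConfig m q)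
    (i j h : Fin 7) :
    ∑ k, m k * (Rinv q i k - Rinv q j k) * Delta q i j h k = 0 := by
  obtain ⟨lam, heq⟩ := hcc
  have Hi := congrArg (det3L (q i - q j) (q h - q i)) (heq i)
  have Hj := congrArg (det3L (q i - q j) (q h - q i)) (heq j)
  simp only [map_sum, map_smul, smul_eq_mul, det3L_apply] at Hi Hj
  have hjk : ∀ k, det3 (q i - q j) (q h - q i) (q j - q k)
      = det3 (q i - q j) (q h - q i) (q i - q k) := by
    intro k
    have h1 : det3 (q i - q j) (q h - q i) (q i - q k)
        - det3 (q i - q j) (q h - q i) (q j - q k)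
        = det3 (q i - q j) (q h - q i) (q i - q j) := by
      rw [← det3_sub]; congr 1; abel
    have h2 := det3_self3 (q i - q j) (q h - q i)
    linarith
  have hzero : ∀ a : Fin 7, det3 (q i - q j) (q h - q i) (q a - q a) = 0 := by
    intro a; rw [sub_self]; simp [det3_expand']
  have Hi' : ∑ k, m k * Rinv q i k * det3 (q i - q j) (q h - q i) (q i - q k)
      = lam * det3 (q i - q j) (q h - q i)
        (q i - (∑ j, m j)⁻¹ • ∑ j, m j • q j) := by
    rw [← Hi, eq_comm]
    exact Finset.sum_erase (Finset.univ : Finset (Fin 7))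
      (by rw [hzero i, mul_zero])
  have Hj' : ∑ k, m k * Rinv q j k * det3 (q i - q j) (q h - q i) (q i - q k)
      = lam * det3 (q i - q j) (q h - q i)
        (q j - (∑ j, m j)⁻¹ • ∑ j, m j • q j) := by
    rw [← Hj, eq_comm,
      Finset.sum_erase (Finset.univ : Finset (Fin 7)) (by rw [hzero j, mul_zero])]
    exact Finset.sum_congr rfl fun k _ => by rw [hjk k]
  have hrhs : lam * det3 (q i - q j) (q h - q i)
        (q i - (∑ j, m j)⁻¹ • ∑ j, m j • q j)
      - lam * det3 (q i - q j) (q h - q i)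
        (q j - (∑ j, m j)⁻¹ • ∑ j, m j • q j) = 0 := by
    have h1 : det3 (q i - q j) (q h - q i)
          (q i - (∑ j, m j)⁻¹ • ∑ j, m j • q j)
        - det3 (q i - q j) (q h - q i)
          (q j - (∑ j, m j)⁻¹ • ∑ j, m j • q j)
        = det3 (q i - q j) (q h - q i) (q i - q j) := by
      rw [← det3_sub]; congr 1; abel
    have h2 := det3_self3 (q i - q j) (q h - q i)
    have h3 : det3 (q i - q j) (q h - q i)
          (q i - (∑ j, m j)⁻¹ • ∑ j, m j • q j)
        - det3 (q i - q j) (q h - q i)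
          (q j - (∑ j, m j)⁻¹ • ∑ j, m j • q j) = 0 := by rw [h1, h2]
    linear_combination lam * h3
  have key : ∑ k, (m k * Rinv q i k * det3 (q i - q j) (q h - q i) (q i - q k)
      - m k * Rinv q j k * det3 (q i - q j) (q h - q i) (q i - q k)) = 0 := by
    rw [Finset.sum_sub_distrib, Hi', Hj']
    linarith [hrhs]
  calc ∑ k, m k * (Rinv q i k - Rinv q j k) * Delta q i j h k
      = ∑ k, -(m k * Rinv q i k * det3 (q i - q j) (q h - q i) (q i - q k)
          - m k * Rinv q j k * det3 (q i - q j) (q h - q i) (q i - q k)) := by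
        refine Finset.sum_congr rfl fun k _ => ?_
        rw [det3_neg_delta q i j h k]; ring
    _ = 0 := by rw [Finset.sum_neg_distrib, key, neg_zero]

/-- A rotation of order 3 preserves the oriented volume of differences. -/
lemma det3_rho (ρ : E3 ≃ᵢ E3) (h3 : ρ.trans (ρ.trans ρ) = IsometryEquiv.refl E3)
    (x₁ y₁ x₂ y₂ x₃ y₃ : E3) :
    det3 (ρ x₁ - ρ y₁) (ρ x₂ - ρ y₂) (ρ x₃ - ρ y₃)
      = det3 (x₁ - y₁) (x₂ - y₂) (x₃ - y₃) := by
  have h3' : ∀ x, ρ (ρ (ρ x)) = x := by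
    intro x
    have := congrArg (fun e : E3 ≃ᵢ E3 => e x) h3
    exact this
  set A := ρ.toRealLinearIsometryEquiv with hA
  have hAd : ∀ x y : E3, ρ x - ρ y = A (x - y) := by
    intro x y
    rw [map_sub, IsometryEquiv.toRealLinearIsometryEquiv_apply,
      IsometryEquiv.toRealLinearIsometryEquiv_apply]
    abel
  have hA3 : ∀ z : E3, A (A (A z)) = z := by
    intro z
    have h1 : A z = ρ z - ρ 0 := by simpa using (hAd z 0).symm
    have h2 : A (A z) = ρ (ρ z) - ρ (ρ 0) := by rw [h1, ← hAd]
    have h4 : A (A (A z)) = ρ (ρ (ρ z)) - ρ (ρ (ρ 0)) := by rw [h2, ← hAd]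
    rw [h4, h3' z, h3' 0, sub_zero]
  set E0 : E3 := EuclideanSpace.single 0 1
  set E1 : E3 := EuclideanSpace.single 1 1
  set E2 : E3 := EuclideanSpace.single 2 1
  have hdec : ∀ x : E3, x = x 0 • E0 + x 1 • E1 + x 2 • E2 := by
    intro x; ext i; fin_cases i <;>
      simp [E0, E1, E2, EuclideanSpace.single_apply, PiLp.add_apply, PiLp.smul_apply]
  have hcoord : ∀ (x : E3) (i : Fin 3),
      A x i = x 0 * A E0 i + x 1 * A E1 i + x 2 * A E2 i := by
    intro x i
    conv_lhs => rw [hdec x]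
    rw [map_add, map_add, map_smul, map_smul, map_smul]
    simp [PiLp.add_apply, PiLp.smul_apply]
  have hscale : ∀ u v w : E3, det3 (A u) (A v) (A w)
      = det3 (A E0) (A E1) (A E2) * det3 u v w := by
    intro u v w
    simp only [det3_expand']
    rw [hcoord u 0, hcoord u 1, hcoord u 2, hcoord v 0, hcoord v 1, hcoord v 2,
      hcoord w 0, hcoord w 1, hcoord w 2]
    ring
  set dA := det3 (A E0) (A E1) (A E2) with hdA
  have hone : det3 E0 E1 E2 = 1 := by
    simp [det3_expand', E0, E1, E2, EuclideanSpace.single_apply]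
  have hcube : dA * dA * dA = 1 := by
    have c1 : det3 (A (A (A E0))) (A (A (A E1))) (A (A (A E2)))
        = dA * (dA * (dA * det3 E0 E1 E2)) := by
      rw [hscale, hscale, hscale]
    rw [hA3, hA3, hA3, hone, mul_one] at c1
    linear_combination -c1
  have hdA1 : dA = 1 := by
    have hfac : (dA - 1) * (dA * dA + dA + 1) = 0 := by linear_combination hcube
    have hpos : 0 < dA * dA + dA + 1 := by nlinarith [sq_nonneg (2 * dA + 1)]
    rcases mul_eq_zero.mp hfac with h | h
    · linarith
    · linarith
  rw [hAd, hAd, hAd, hscale, hdA1, one_mul]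

/-- Cube roots are unique among positive reals (inverse form). -/
lemma cube_inv_inj {x y : ℝ} (hx : 0 < x) (hy : 0 < y)
    (hxy : (x ^ 3)⁻¹ = (y ^ 3)⁻¹) : x = y := by
  have h1 : x ^ 3 = y ^ 3 := inv_injective hxy
  by_contra hne
  rcases Ne.lt_or_gt hne with h | h
  · have := pow_lt_pow_left₀ h hx.le (by norm_num : (3:ℕ) ≠ 0)
    linarith
  · have := pow_lt_pow_left₀ h hy.le (by norm_num : (3:ℕ) ≠ 0)
    linarith
/-- For a symmetric configuration with `r₁₅ ≠ r₁₆`, `Δ₁₂₃₅ ≠ 0` and `Δ₁₅₆₇ ≠ 0`,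
any positive masses making it a central configuration satisfy `m₁ = m₂ = m₃` and
`m₅ = m₆ = m₇`. -/
theorem statement7 (q : Fin 7 → E3) (hq : Function.Injective q)
    (hsym : IsSymmetricConfig q)
    (hr : dist (q 0) (q 4) ≠ dist (q 0) (q 5))
    (hΔ1 : Delta q 0 1 2 4 ≠ 0) (hΔ2 : Delta q 0 4 5 6 ≠ 0)
    (m : Fin 7 → ℝ) (hm : ∀ i, 0 < m i)
    (hcc : IsCentralConfig m q) :
    (m 0 = m 1 ∧ m 1 = m 2) ∧ (m 4 = m 5 ∧ m 5 = m 6) := by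
  obtain ⟨h01, h02, h12, h03, h13, h23, e1, e2, e3, e4, e5, e6, e7, e8, e9, e10, e11,
    ρ, hρ3, r0, r1, r2, r4, r5, r6, r3⟩ := hsym
  clear h01 h02 h12 e5 e6 hm
  have hdR : ∀ i k : Fin 7, Rinv q i k = (dist (q i) (q k) ^ 3)⁻¹ := by
    intro i k; rw [Rinv, dist_eq_norm]
  have hRsymm : ∀ i k : Fin 7, Rinv q i k = Rinv q k i := by
    intro i k; rw [Rinv, Rinv, norm_sub_rev]
  -- Rinv equalities coming from the distance relations
  have R15 : Rinv q 1 5 = Rinv q 0 4 := by rw [hdR, hdR, ← e1]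
  have R26 : Rinv q 2 6 = Rinv q 0 4 := by rw [hdR, hdR, ← e2, ← e1]
  have R06 : Rinv q 0 6 = Rinv q 0 5 := by rw [hdR, hdR, ← e7]
  have R14 : Rinv q 1 4 = Rinv q 0 5 := by rw [hdR, hdR, ← e8, ← e7]
  have R16 : Rinv q 1 6 = Rinv q 0 5 := by rw [hdR, hdR, ← e9, ← e8, ← e7]
  have R24 : Rinv q 2 4 = Rinv q 0 5 := by rw [hdR, hdR, ← e10, ← e9, ← e8, ← e7]
  have R25 : Rinv q 2 5 = Rinv q 0 5 := by rw [hdR, hdR, ← e11, ← e10, ← e9, ← e8, ← e7]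
  have R03 : Rinv q 0 3 = Rinv q 1 3 := by rw [hdR, hdR, h03, h13]
  have R13 : Rinv q 1 3 = Rinv q 2 3 := by rw [hdR, hdR, h13, h23]
  have R40 : Rinv q 4 0 = Rinv q 0 4 := hRsymm 4 0
  have R50 : Rinv q 5 0 = Rinv q 0 5 := hRsymm 5 0
  have R41 : Rinv q 4 1 = Rinv q 0 5 := (hRsymm 4 1).trans R14
  have R51 : Rinv q 5 1 = Rinv q 0 4 := (hRsymm 5 1).trans R15
  have R42 : Rinv q 4 2 = Rinv q 0 5 := (hRsymm 4 2).trans R24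
  have R52 : Rinv q 5 2 = Rinv q 0 5 := (hRsymm 5 2).trans R25
  have R60 : Rinv q 6 0 = Rinv q 0 5 := (hRsymm 6 0).trans R06
  have R61 : Rinv q 6 1 = Rinv q 0 5 := (hRsymm 6 1).trans R16
  have R62 : Rinv q 6 2 = Rinv q 0 4 := (hRsymm 6 2).trans R26
  have R43 : Rinv q 4 3 = Rinv q 5 3 := by
    rw [hRsymm 4 3, hRsymm 5 3, hdR, hdR, e3]
  have R63 : Rinv q 6 3 = Rinv q 5 3 := by
    rw [hRsymm 6 3, hRsymm 5 3, hdR, hdR, e4]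
  -- the two basic mutual distances are different
  have hne : Rinv q 0 4 ≠ Rinv q 0 5 := by
    rw [hdR 0 4, hdR 0 5]
    intro hcon
    have h04 : 0 < dist (q 0) (q 4) :=
      dist_pos.mpr fun he => absurd (hq he) (by decide)
    have h05 : 0 < dist (q 0) (q 5) :=
      dist_pos.mpr fun he => absurd (hq he) (by decide)
    exact hr (cube_inv_inj h04 h05 hcon)
  have hsub : Rinv q 0 4 - Rinv q 0 5 ≠ 0 := sub_ne_zero.mpr hne
  -- volume relations from the rotation
  have hS1 : Delta q 1 2 0 5 = Delta q 0 1 2 4 := by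
    have h := det3_rho ρ hρ3 (q 0) (q 1) (q 1) (q 2) (q 2) (q 4)
    rw [r0, r1, r2, r4] at h
    exact h
  have hS2 : Delta q 1 2 0 6 = Delta q 0 1 2 5 := by
    have h := det3_rho ρ hρ3 (q 0) (q 1) (q 1) (q 2) (q 2) (q 5)
    rw [r0, r1, r2, r5] at h
    exact h
  have hS3 : Delta q 5 6 4 1 = Delta q 4 5 6 0 := by
    have h := det3_rho ρ hρ3 (q 4) (q 5) (q 5) (q 6) (q 6) (q 0)
    rw [r4, r5, r6, r0] at h
    exact h
  have hS4 : Delta q 5 6 4 2 = Delta q 4 5 6 1 := by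
    have h := det3_rho ρ hρ3 (q 4) (q 5) (q 5) (q 6) (q 6) (q 1)
    rw [r4, r5, r6, r1] at h
    exact h
  have hD1 : Delta q 0 1 2 5 = Delta q 0 1 2 4 := by
    rw [← Delta_cycl q 0 1 2 5]; exact hS1
  have hD4561 : Delta q 4 5 6 1 = Delta q 4 5 6 0 := by
    rw [← Delta_cycl q 4 5 6 1]; exact hS3
  have hΔ0 : Delta q 4 5 6 0 ≠ 0 := by
    rw [Delta_rot4 q 0 4 5 6]
    exact neg_ne_zero.mpr hΔ2
  -- equation A : masses 4 and 5
  have EA := sum_univ_f hcc 0 1 2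
  rw [Fin.sum_univ_seven] at EA
  rw [Delta_ki q 0 1 2, Delta_kj q 0 1 2, Delta_kh q 0 1 2,
    R03, R06, R16, R14, R15, hD1] at EA
  have hm45 : m 4 = m 5 := by
    have hfac : (m 4 - m 5) * ((Rinv q 0 4 - Rinv q 0 5) * Delta q 0 1 2 4) = 0 := by
      linear_combination EA
    have h1 := (mul_eq_zero.mp hfac).resolve_right (mul_ne_zero hsub hΔ1)
    linarith
  -- equation B : masses 5 and 6
  have EB := sum_univ_f hcc 1 2 0
  rw [Fin.sum_univ_seven] at EB
  rw [Delta_ki q 1 2 0, Delta_kj q 1 2 0, Delta_kh q 1 2 0,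
    R13, R14, R24, R15, R25, R16, R26, hS1, hS2, hD1] at EB
  have hm56 : m 5 = m 6 := by
    have hfac : (m 5 - m 6) * ((Rinv q 0 4 - Rinv q 0 5) * Delta q 0 1 2 4) = 0 := by
      linear_combination EB
    have h1 := (mul_eq_zero.mp hfac).resolve_right (mul_ne_zero hsub hΔ1)
    linarith
  -- equation C : masses 0 and 1
  have EC := sum_univ_f hcc 4 5 6
  rw [Fin.sum_univ_seven] at EC
  rw [Delta_ki q 4 5 6, Delta_kj q 4 5 6, Delta_kh q 4 5 6,
    R40, R50, R41, R51, R42, R52, R43, hD4561] at EC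
  have hm01 : m 0 = m 1 := by
    have hfac : (m 0 - m 1) * ((Rinv q 0 4 - Rinv q 0 5) * Delta q 4 5 6 0) = 0 := by
      linear_combination EC
    have h1 := (mul_eq_zero.mp hfac).resolve_right (mul_ne_zero hsub hΔ0)
    linarith
  -- equation D : masses 1 and 2
  have ED := sum_univ_f hcc 5 6 4
  rw [Fin.sum_univ_seven] at ED
  rw [Delta_ki q 5 6 4, Delta_kj q 5 6 4, Delta_kh q 5 6 4,
    R50, R60, R51, R61, R52, R62, R63, hS3, hS4, hD4561] at ED
  have hm12 : m 1 = m 2 := by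
    have hfac : (m 1 - m 2) * ((Rinv q 0 4 - Rinv q 0 5) * Delta q 4 5 6 0) = 0 := by
      linear_combination ED
    have h1 := (mul_eq_zero.mp hfac).resolve_right (mul_ne_zero hsub hΔ0)
    linarith
  exact ⟨⟨hm01, hm12⟩, ⟨hm45, hm56⟩⟩
end
end

section
/- Let q₁,…,q₇ in ℝ³ be a symmetric configuration in Ω with masses satisfying m₁ = m₂ = m₃ and m₅ = m₆ = m₇, and let b = r₅₆. Then f₁₇₅ = −b·f₂₅₁. -/
noncomputable section

open Finset

open scoped RealInnerProductSpace

private lemma inner4 (a b c d : E3) : ⟪a - b, c - d⟫ =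
    (‖a - d‖^2 + ‖b - c‖^2 - ‖a - c‖^2 - ‖b - d‖^2) / 2 := by
  simp only [norm_sub_sq_real, inner_sub_left, inner_sub_right]
  ring

private lemma det3_apply (u v w : E3) : det3 u v w =
    u 0 * (v 1 * w 2 - v 2 * w 1) - u 1 * (v 0 * w 2 - v 2 * w 0) +
      u 2 * (v 0 * w 1 - v 1 * w 0) := by
  rw [det3, Matrix.det_fin_three]
  simp
  ring

private lemma det3_sq (z1 z2 z3 : E3) : det3 z1 z2 z3 ^ 2 =
    Matrix.det !![⟪z1,z1⟫, ⟪z1,z2⟫, ⟪z1,z3⟫; ⟪z1,z2⟫, ⟪z2,z2⟫, ⟪z2,z3⟫;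
      ⟪z1,z3⟫, ⟪z2,z3⟫, ⟪z3,z3⟫] := by
  simp [det3, Matrix.det_fin_three, PiLp.inner_apply, RCLike.inner_apply, Fin.sum_univ_three, -real_inner_self_eq_norm_sq]
  simp only [EuclideanSpace.norm_eq, Fin.sum_univ_three, Real.norm_eq_abs, sq_abs]
  rw [Real.sq_sqrt (by positivity), Real.sq_sqrt (by positivity), Real.sq_sqrt (by positivity)]
  ring

private lemma eq_zero_of_inner3 (z1 z2 z3 u : E3) (hdet : det3 z1 z2 z3 ≠ 0)
    (h1 : ⟪z1, u⟫ = 0) (h2 : ⟪z2, u⟫ = 0) (h3 : ⟪z3, u⟫ = 0) : u = 0 := by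
  by_contra hu
  apply hdet
  rw [det3, ← Matrix.exists_mulVec_eq_zero_iff]
  simp only [PiLp.inner_apply, RCLike.inner_apply, Fin.sum_univ_three, conj_trivial] at h1 h2 h3
  refine ⟨![u 0, u 1, u 2], ?_, ?_⟩
  · intro h0
    apply hu
    ext i
    fin_cases i
    · exact congrFun h0 0
    · exact congrFun h0 1
    · exact congrFun h0 2
  · funext i
    fin_cases i <;>
      simp [Matrix.mulVec, dotProduct, Fin.sum_univ_three] <;>
      linarith [h1, h2, h3]

private lemma det3_eq_zero_of_orth (n u v w : E3) (hn : n ≠ 0)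
    (h1 : ⟪u, n⟫ = 0) (h2 : ⟪v, n⟫ = 0) (h3 : ⟪w, n⟫ = 0) : det3 u v w = 0 := by
  rw [det3, ← Matrix.exists_mulVec_eq_zero_iff]
  simp only [PiLp.inner_apply, RCLike.inner_apply, Fin.sum_univ_three, conj_trivial] at h1 h2 h3
  refine ⟨![n 0, n 1, n 2], ?_, ?_⟩
  · intro h0
    apply hn
    ext i
    fin_cases i
    · exact congrFun h0 0
    · exact congrFun h0 1
    · exact congrFun h0 2
  · funext i
    fin_cases i <;>
      simp [Matrix.mulVec, dotProduct, Fin.sum_univ_three] <;>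
      linarith [h1, h2, h3]

private lemma reconstruct (z1 z2 z3 u : E3)
    (g11 : ⟪z1,z1⟫ = 1) (g12 : ⟪z1,z2⟫ = -(1/2)) (g13 : ⟪z1,z3⟫ = 0)
    (g22 : ⟪z2,z2⟫ = 1) (g23 : ⟪z2,z3⟫ = 0) (g33 : ⟪z3,z3⟫ = 6)
    (h1 : ⟪z1, u⟫ = 0) (h2 : ⟪z2, u⟫ = 0) (h3 : ⟪z3, u⟫ = 0) : u = 0 := by
  refine eq_zero_of_inner3 z1 z2 z3 u ?_ h1 h2 h3
  intro h0
  have hsq := det3_sq z1 z2 z3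
  rw [h0, g11, g12, g13, g22, g23, g33] at hsq
  simp [Matrix.det_fin_three, Matrix.vecHead, Matrix.vecTail] at hsq
  norm_num at hsq

/-- For a symmetric configuration in `Ω` with `m₁ = m₂ = m₃` and `m₅ = m₆ = m₇`,
with `b = r₅₆`, one has `f₁₇₅ = −b·f₂₅₁`. -/
theorem statement10 (q : Fin 7 → E3) (m : Fin 7 → ℝ)
    (hΩ : InOmega q)
    (hm12 : m 0 = m 1) (hm23 : m 1 = m 2) (hm56 : m 4 = m 5) (hm67 : m 5 = m 6) :
    fval m q 0 6 4 = -(dist (q 4) (q 5) * fval m q 1 4 0) := by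
  obtain ⟨hsym, -, -, -, -, h3x, h4s⟩ := hΩ
  obtain ⟨d01, d02, d12, d03, d13, d23, h0415, h1526, h3435, h3536,
    h4556, h5646, h0506, h0614, h1416, h1624, h2425, -⟩ := hsym
  have e15 : dist (q 1) (q 5) = dist (q 0) (q 4) := h0415.symm
  have e26 : dist (q 2) (q 6) = dist (q 0) (q 4) := by rw [← h1526]; exact h0415.symm
  have e35 : dist (q 3) (q 5) = dist (q 3) (q 4) := h3435.symm
  have e36 : dist (q 3) (q 6) = dist (q 3) (q 4) := by rw [← h3536]; exact h3435.symm
  have e06 : dist (q 0) (q 6) = dist (q 0) (q 5) := h0506.symm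
  have e14 : dist (q 1) (q 4) = dist (q 0) (q 5) := by rw [← h0614]; exact h0506.symm
  have e16 : dist (q 1) (q 6) = dist (q 0) (q 5) := by rw [← h1416]; exact e14
  have e24 : dist (q 2) (q 4) = dist (q 0) (q 5) := by rw [← h1624]; exact e16
  have e25 : dist (q 2) (q 5) = dist (q 0) (q 5) := by rw [← h2425]; exact e24
  have e56 : dist (q 5) (q 6) = dist (q 4) (q 5) := h4556.symm
  have e46 : dist (q 4) (q 6) = dist (q 4) (q 5) := by rw [← h5646]; exact h4556.symm
  have c10 : dist (q 1) (q 0) = 1 := by rw [dist_comm]; exact d01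
  have c20 : dist (q 2) (q 0) = 1 := by rw [dist_comm]; exact d02
  have c21 : dist (q 2) (q 1) = 1 := by rw [dist_comm]; exact d12
  have c30 : dist (q 3) (q 0) = 1 := by rw [dist_comm]; exact d03
  have c31 : dist (q 3) (q 1) = 1 := by rw [dist_comm]; exact d13
  have c32 : dist (q 3) (q 2) = 1 := by rw [dist_comm]; exact d23
  have w40 : dist (q 4) (q 0) = dist (q 0) (q 4) := dist_comm _ _
  have w51 : dist (q 5) (q 1) = dist (q 0) (q 4) := by rw [dist_comm]; exact e15
  have w62 : dist (q 6) (q 2) = dist (q 0) (q 4) := by rw [dist_comm]; exact e26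
  have w43 : dist (q 4) (q 3) = dist (q 3) (q 4) := dist_comm _ _
  have w53 : dist (q 5) (q 3) = dist (q 3) (q 4) := by rw [dist_comm]; exact e35
  have w63 : dist (q 6) (q 3) = dist (q 3) (q 4) := by rw [dist_comm]; exact e36
  have w50 : dist (q 5) (q 0) = dist (q 0) (q 5) := dist_comm _ _
  have w60 : dist (q 6) (q 0) = dist (q 0) (q 5) := by rw [dist_comm]; exact e06
  have w41 : dist (q 4) (q 1) = dist (q 0) (q 5) := by rw [dist_comm]; exact e14
  have w61 : dist (q 6) (q 1) = dist (q 0) (q 5) := by rw [dist_comm]; exact e16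
  have w42 : dist (q 4) (q 2) = dist (q 0) (q 5) := by rw [dist_comm]; exact e24
  have w52 : dist (q 5) (q 2) = dist (q 0) (q 5) := by rw [dist_comm]; exact e25
  have w54 : dist (q 5) (q 4) = dist (q 4) (q 5) := dist_comm _ _
  have w65 : dist (q 6) (q 5) = dist (q 4) (q 5) := by rw [dist_comm]; exact e56
  have w64 : dist (q 6) (q 4) = dist (q 4) (q 5) := by rw [dist_comm]; exact e46
  set t : ℝ := dist (q 0) (q 5) ^ 2 - dist (q 0) (q 4) ^ 2 with htdef
  have g11 : ⟪q 1 - q 0, q 1 - q 0⟫ = 1 := by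
    simp only [inner_add_left, inner_add_right, inner4, ← dist_eq_norm, d01, d02, d12, d03, d13, d23, c10, c20, c21, c30, c31, c32, e15, e26, e35, e36, e06, e14, e16, e24, e25, e56, e46, w40, w51, w62, w43, w53, w63, w50, w60, w41, w61, w42, w52, w54, w65, w64, dist_self]
    ring
  have g12 : ⟪q 1 - q 0, q 2 - q 1⟫ = -(1/2) := by
    simp only [inner_add_left, inner_add_right, inner4, ← dist_eq_norm, d01, d02, d12, d03, d13, d23, c10, c20, c21, c30, c31, c32, e15, e26, e35, e36, e06, e14, e16, e24, e25, e56, e46, w40, w51, w62, w43, w53, w63, w50, w60, w41, w61, w42, w52, w54, w65, w64, dist_self]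
    ring
  have g13 : ⟪q 1 - q 0, (q 0 - q 3) + ((q 1 - q 3) + (q 2 - q 3))⟫ = 0 := by
    simp only [inner_add_left, inner_add_right, inner4, ← dist_eq_norm, d01, d02, d12, d03, d13, d23, c10, c20, c21, c30, c31, c32, e15, e26, e35, e36, e06, e14, e16, e24, e25, e56, e46, w40, w51, w62, w43, w53, w63, w50, w60, w41, w61, w42, w52, w54, w65, w64, dist_self]
    ring
  have g21 : ⟪q 2 - q 1, q 1 - q 0⟫ = -(1/2) := by
    simp only [inner_add_left, inner_add_right, inner4, ← dist_eq_norm, d01, d02, d12, d03, d13, d23, c10, c20, c21, c30, c31, c32, e15, e26, e35, e36, e06, e14, e16, e24, e25, e56, e46, w40, w51, w62, w43, w53, w63, w50, w60, w41, w61, w42, w52, w54, w65, w64, dist_self]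
    ring
  have g22 : ⟪q 2 - q 1, q 2 - q 1⟫ = 1 := by
    simp only [inner_add_left, inner_add_right, inner4, ← dist_eq_norm, d01, d02, d12, d03, d13, d23, c10, c20, c21, c30, c31, c32, e15, e26, e35, e36, e06, e14, e16, e24, e25, e56, e46, w40, w51, w62, w43, w53, w63, w50, w60, w41, w61, w42, w52, w54, w65, w64, dist_self]
    ring
  have g23 : ⟪q 2 - q 1, (q 0 - q 3) + ((q 1 - q 3) + (q 2 - q 3))⟫ = 0 := by
    simp only [inner_add_left, inner_add_right, inner4, ← dist_eq_norm, d01, d02, d12, d03, d13, d23, c10, c20, c21, c30, c31, c32, e15, e26, e35, e36, e06, e14, e16, e24, e25, e56, e46, w40, w51, w62, w43, w53, w63, w50, w60, w41, w61, w42, w52, w54, w65, w64, dist_self]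
    ring
  have g33 : ⟪(q 0 - q 3) + ((q 1 - q 3) + (q 2 - q 3)), (q 0 - q 3) + ((q 1 - q 3) + (q 2 - q 3))⟫ = 6 := by
    simp only [inner_add_left, inner_add_right, inner4, ← dist_eq_norm, d01, d02, d12, d03, d13, d23, c10, c20, c21, c30, c31, c32, e15, e26, e35, e36, e06, e14, e16, e24, e25, e56, e46, w40, w51, w62, w43, w53, w63, w50, w60, w41, w61, w42, w52, w54, w65, w64, dist_self]
    ring
  have g31 : ⟪(q 0 - q 3) + ((q 1 - q 3) + (q 2 - q 3)), q 1 - q 0⟫ = 0 := by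
    simp only [inner_add_left, inner_add_right, inner4, ← dist_eq_norm, d01, d02, d12, d03, d13, d23, c10, c20, c21, c30, c31, c32, e15, e26, e35, e36, e06, e14, e16, e24, e25, e56, e46, w40, w51, w62, w43, w53, w63, w50, w60, w41, w61, w42, w52, w54, w65, w64, dist_self]
    ring
  have g32 : ⟪(q 0 - q 3) + ((q 1 - q 3) + (q 2 - q 3)), q 2 - q 1⟫ = 0 := by
    simp only [inner_add_left, inner_add_right, inner4, ← dist_eq_norm, d01, d02, d12, d03, d13, d23, c10, c20, c21, c30, c31, c32, e15, e26, e35, e36, e06, e14, e16, e24, e25, e56, e46, w40, w51, w62, w43, w53, w63, w50, w60, w41, w61, w42, w52, w54, w65, w64, dist_self]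
    ring
  have i1 : ⟪q 1 - q 0, q 5 - q 4⟫ = t := by
    simp only [inner_add_left, inner_add_right, inner4, ← dist_eq_norm, d01, d02, d12, d03, d13, d23, c10, c20, c21, c30, c31, c32, e15, e26, e35, e36, e06, e14, e16, e24, e25, e56, e46, w40, w51, w62, w43, w53, w63, w50, w60, w41, w61, w42, w52, w54, w65, w64, dist_self]
    rw [htdef]; ring
  have i2 : ⟪q 2 - q 1, q 5 - q 4⟫ = -(t/2) := by
    simp only [inner_add_left, inner_add_right, inner4, ← dist_eq_norm, d01, d02, d12, d03, d13, d23, c10, c20, c21, c30, c31, c32, e15, e26, e35, e36, e06, e14, e16, e24, e25, e56, e46, w40, w51, w62, w43, w53, w63, w50, w60, w41, w61, w42, w52, w54, w65, w64, dist_self]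
    rw [htdef]; ring
  have i3 : ⟪(q 0 - q 3) + ((q 1 - q 3) + (q 2 - q 3)), q 5 - q 4⟫ = 0 := by
    simp only [inner_add_left, inner_add_right, inner4, ← dist_eq_norm, d01, d02, d12, d03, d13, d23, c10, c20, c21, c30, c31, c32, e15, e26, e35, e36, e06, e14, e16, e24, e25, e56, e46, w40, w51, w62, w43, w53, w63, w50, w60, w41, w61, w42, w52, w54, w65, w64, dist_self]
    ring
  have g12b : ⟪q 2 - q 1, q 0 - q 2⟫ = -(1/2) := by
    simp only [inner_add_left, inner_add_right, inner4, ← dist_eq_norm, d01, d02, d12, d03, d13, d23, c10, c20, c21, c30, c31, c32, e15, e26, e35, e36, e06, e14, e16, e24, e25, e56, e46, w40, w51, w62, w43, w53, w63, w50, w60, w41, w61, w42, w52, w54, w65, w64, dist_self]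
    ring
  have g21b : ⟪q 0 - q 2, q 2 - q 1⟫ = -(1/2) := by
    simp only [inner_add_left, inner_add_right, inner4, ← dist_eq_norm, d01, d02, d12, d03, d13, d23, c10, c20, c21, c30, c31, c32, e15, e26, e35, e36, e06, e14, e16, e24, e25, e56, e46, w40, w51, w62, w43, w53, w63, w50, w60, w41, w61, w42, w52, w54, w65, w64, dist_self]
    ring
  have g22b : ⟪q 0 - q 2, q 0 - q 2⟫ = 1 := by
    simp only [inner_add_left, inner_add_right, inner4, ← dist_eq_norm, d01, d02, d12, d03, d13, d23, c10, c20, c21, c30, c31, c32, e15, e26, e35, e36, e06, e14, e16, e24, e25, e56, e46, w40, w51, w62, w43, w53, w63, w50, w60, w41, w61, w42, w52, w54, w65, w64, dist_self]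
    ring
  have g23b : ⟪q 0 - q 2, (q 0 - q 3) + ((q 1 - q 3) + (q 2 - q 3))⟫ = 0 := by
    simp only [inner_add_left, inner_add_right, inner4, ← dist_eq_norm, d01, d02, d12, d03, d13, d23, c10, c20, c21, c30, c31, c32, e15, e26, e35, e36, e06, e14, e16, e24, e25, e56, e46, w40, w51, w62, w43, w53, w63, w50, w60, w41, w61, w42, w52, w54, w65, w64, dist_self]
    ring
  have j1 : ⟪q 2 - q 1, q 6 - q 5⟫ = t := by
    simp only [inner_add_left, inner_add_right, inner4, ← dist_eq_norm, d01, d02, d12, d03, d13, d23, c10, c20, c21, c30, c31, c32, e15, e26, e35, e36, e06, e14, e16, e24, e25, e56, e46, w40, w51, w62, w43, w53, w63, w50, w60, w41, w61, w42, w52, w54, w65, w64, dist_self]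
    rw [htdef]; ring
  have j2 : ⟪q 0 - q 2, q 6 - q 5⟫ = -(t/2) := by
    simp only [inner_add_left, inner_add_right, inner4, ← dist_eq_norm, d01, d02, d12, d03, d13, d23, c10, c20, c21, c30, c31, c32, e15, e26, e35, e36, e06, e14, e16, e24, e25, e56, e46, w40, w51, w62, w43, w53, w63, w50, w60, w41, w61, w42, w52, w54, w65, w64, dist_self]
    rw [htdef]; ring
  have j3 : ⟪(q 0 - q 3) + ((q 1 - q 3) + (q 2 - q 3)), q 6 - q 5⟫ = 0 := by
    simp only [inner_add_left, inner_add_right, inner4, ← dist_eq_norm, d01, d02, d12, d03, d13, d23, c10, c20, c21, c30, c31, c32, e15, e26, e35, e36, e06, e14, e16, e24, e25, e56, e46, w40, w51, w62, w43, w53, w63, w50, w60, w41, w61, w42, w52, w54, w65, w64, dist_self]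
    ring
  have o1 : ⟪q 0 - q 3, q 1 - q 2⟫ = 0 := by
    simp only [inner_add_left, inner_add_right, inner4, ← dist_eq_norm, d01, d02, d12, d03, d13, d23, c10, c20, c21, c30, c31, c32, e15, e26, e35, e36, e06, e14, e16, e24, e25, e56, e46, w40, w51, w62, w43, w53, w63, w50, w60, w41, w61, w42, w52, w54, w65, w64, dist_self]
    ring
  have o2 : ⟪(q 1 - q 3) + (q 2 - q 3), q 1 - q 2⟫ = 0 := by
    simp only [inner_add_left, inner_add_right, inner4, ← dist_eq_norm, d01, d02, d12, d03, d13, d23, c10, c20, c21, c30, c31, c32, e15, e26, e35, e36, e06, e14, e16, e24, e25, e56, e46, w40, w51, w62, w43, w53, w63, w50, w60, w41, w61, w42, w52, w54, w65, w64, dist_self]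
    ring
  have o3 : ⟪q 4 - q 3, q 1 - q 2⟫ = 0 := by
    simp only [inner_add_left, inner_add_right, inner4, ← dist_eq_norm, d01, d02, d12, d03, d13, d23, c10, c20, c21, c30, c31, c32, e15, e26, e35, e36, e06, e14, e16, e24, e25, e56, e46, w40, w51, w62, w43, w53, w63, w50, w60, w41, w61, w42, w52, w54, w65, w64, dist_self]
    ring
  have hu1 : ⟪q 1 - q 0, q 5 - q 4 - t • (q 1 - q 0)⟫ = 0 := by
    rw [inner_sub_right, real_inner_smul_right, i1, g11]; ring
  have hu2 : ⟪q 2 - q 1, q 5 - q 4 - t • (q 1 - q 0)⟫ = 0 := by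
    rw [inner_sub_right, real_inner_smul_right, i2, g21]; ring
  have hu3 : ⟪(q 0 - q 3) + ((q 1 - q 3) + (q 2 - q 3)), q 5 - q 4 - t • (q 1 - q 0)⟫ = 0 := by
    rw [inner_sub_right, real_inner_smul_right, i3, g31]; ring
  have h5 : q 5 - q 4 = t • (q 1 - q 0) :=
    sub_eq_zero.mp (reconstruct (q 1 - q 0) (q 2 - q 1) ((q 0 - q 3) + ((q 1 - q 3) + (q 2 - q 3))) _
      g11 g12 g13 g22 g23 g33 hu1 hu2 hu3)
  have hv1 : ⟪q 2 - q 1, q 6 - q 5 - t • (q 2 - q 1)⟫ = 0 := by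
    rw [inner_sub_right, real_inner_smul_right, j1, g22]; ring
  have hv2 : ⟪q 0 - q 2, q 6 - q 5 - t • (q 2 - q 1)⟫ = 0 := by
    rw [inner_sub_right, real_inner_smul_right, j2, g21b]; ring
  have hv3 : ⟪(q 0 - q 3) + ((q 1 - q 3) + (q 2 - q 3)), q 6 - q 5 - t • (q 2 - q 1)⟫ = 0 := by
    rw [inner_sub_right, real_inner_smul_right, j3, g32]; ring
  have h6 : q 6 - q 5 = t • (q 2 - q 1) :=
    sub_eq_zero.mp (reconstruct (q 2 - q 1) (q 0 - q 2) ((q 0 - q 3) + ((q 1 - q 3) + (q 2 - q 3))) _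
      g22 g12b g23 g22b g23b g33 hv1 hv2 hv3)
  have h5p : q 5 = t • (q 1 - q 0) + q 4 := sub_eq_iff_eq_add.mp h5
  have h6p : q 6 = t • (q 2 - q 1) + q 5 := sub_eq_iff_eq_add.mp h6
  have hne : q 1 - q 2 ≠ 0 := by
    refine sub_ne_zero.mpr fun h => ?_
    rw [h, dist_self] at d12
    norm_num at d12
  have hS0 : det3 (q 0 - q 3) ((q 1 - q 3) + (q 2 - q 3)) (q 4 - q 3) = 0 :=
    det3_eq_zero_of_orth (q 1 - q 2) _ _ _ hne o1 o2 o3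
  have ht0 : 0 ≤ t := by
    rw [htdef]
    have hsx : dist (q 0) (q 4) ≤ dist (q 0) (q 5) := (h4s.trans h3x).le
    exact sub_nonneg.mpr (pow_le_pow_left₀ dist_nonneg hsx 2)
  have hb : dist (q 4) (q 5) = t := by
    rw [dist_eq_norm, ← neg_sub, norm_neg, h5, norm_smul, Real.norm_eq_abs,
      ← dist_eq_norm, c10, abs_of_nonneg ht0, mul_one]
  have hS0c := hS0
  simp only [det3_apply, PiLp.sub_apply, PiLp.add_apply, PiLp.smul_apply, smul_eq_mul] at hS0c
  have dZ1 : Delta q 0 6 4 2 = 0 := by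
    simp only [Delta]
    rw [h6p, h5p]
    simp only [det3_apply, PiLp.sub_apply, PiLp.add_apply, PiLp.smul_apply, smul_eq_mul]
    ring
  have dZ2 : Delta q 1 4 0 5 = 0 := by
    simp only [Delta]
    rw [h5p]
    simp only [det3_apply, PiLp.sub_apply, PiLp.add_apply, PiLp.smul_apply, smul_eq_mul]
    ring
  have dB : Delta q 0 6 4 1 = -(t * Delta q 1 4 0 2) := by
    simp only [Delta]
    rw [h6p, h5p]
    simp only [det3_apply, PiLp.sub_apply, PiLp.add_apply, PiLp.smul_apply, smul_eq_mul]
    ring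
  have dC : Delta q 0 6 4 5 = -(t * Delta q 1 4 0 6) := by
    simp only [Delta]
    rw [h6p, h5p]
    simp only [det3_apply, PiLp.sub_apply, PiLp.add_apply, PiLp.smul_apply, smul_eq_mul]
    ring
  have dA : Delta q 0 6 4 3 = -(t * Delta q 1 4 0 3) := by
    simp only [Delta]
    rw [h6p, h5p]
    simp only [det3_apply, PiLp.sub_apply, PiLp.add_apply, PiLp.smul_apply, smul_eq_mul]
    linear_combination t * hS0c
  have RD : ∀ i j : Fin 7, Rinv q i j = (dist (q i) (q j) ^ 3)⁻¹ := fun i j => by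
    rw [Rinv, dist_eq_norm]
  have r01 : Rinv q 0 1 = 1 := by rw [RD, d01]; norm_num
  have r02 : Rinv q 0 2 = 1 := by rw [RD, d02]; norm_num
  have r03 : Rinv q 0 3 = 1 := by rw [RD, d03]; norm_num
  have r12 : Rinv q 1 2 = 1 := by rw [RD, d12]; norm_num
  have r13 : Rinv q 1 3 = 1 := by rw [RD, d13]; norm_num
  have r61 : Rinv q 6 1 = (dist (q 0) (q 5) ^ 3)⁻¹ := by rw [RD, w61]
  have r62 : Rinv q 6 2 = (dist (q 0) (q 4) ^ 3)⁻¹ := by rw [RD, w62]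
  have r63 : Rinv q 6 3 = (dist (q 3) (q 4) ^ 3)⁻¹ := by rw [RD, w63]
  have r05 : Rinv q 0 5 = (dist (q 0) (q 5) ^ 3)⁻¹ := RD 0 5
  have r65 : Rinv q 6 5 = (t ^ 3)⁻¹ := by rw [RD, w65, hb]
  have r42 : Rinv q 4 2 = (dist (q 0) (q 5) ^ 3)⁻¹ := by rw [RD, w42]
  have r43 : Rinv q 4 3 = (dist (q 3) (q 4) ^ 3)⁻¹ := by rw [RD, w43]
  have r15 : Rinv q 1 5 = (dist (q 0) (q 4) ^ 3)⁻¹ := by rw [RD, e15]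
  have r45 : Rinv q 4 5 = (t ^ 3)⁻¹ := by rw [RD, hb]
  have r16 : Rinv q 1 6 = (dist (q 0) (q 5) ^ 3)⁻¹ := by rw [RD, e16]
  have r46 : Rinv q 4 6 = (t ^ 3)⁻¹ := by rw [RD, e46, hb]
  have hm1 : m 1 = m 0 := hm12.symm
  have hm2 : m 2 = m 0 := by rw [← hm23]; exact hm12.symm
  have hm5 : m 5 = m 4 := hm56.symm
  have hm6 : m 6 = m 4 := by rw [← hm67]; exact hm56.symm
  have hset1 : (Finset.univ \ {0, 6, 4} : Finset (Fin 7)) = {1, 2, 3, 5} := by decide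
  have hset2 : (Finset.univ \ {1, 4, 0} : Finset (Fin 7)) = {2, 3, 5, 6} := by decide
  rw [fval, fval, hset1, hset2, hb,
    Finset.sum_insert (by decide), Finset.sum_insert (by decide),
    Finset.sum_insert (by decide), Finset.sum_singleton,
    Finset.sum_insert (by decide), Finset.sum_insert (by decide),
    Finset.sum_insert (by decide), Finset.sum_singleton,
    r01, r02, r03, r12, r13, r61, r62, r63, r05, r65, r42, r43, r15, r45, r16, r46,
    hm1, hm2, hm5, hm6, dZ1, dZ2, dB, dC, dA]
  ring
end
end

section
/- Let q₁,…,q₇ in ℝ³ be a symmetric configuration in Ω with masses satisfying m₁ = m₂ = m₃ and m₅ = m₆ = m₇, and let b = r₅₆. Then f₂₇₅ = b·(f₂₅₁ + f₂₇₁). -/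
noncomputable section

open Finset

open scoped RealInnerProductSpace

lemma inner_from_norms (x y : E3) : ⟪x, y⟫ = (‖x‖^2 + ‖y‖^2 - ‖x - y‖^2)/2 := by
  have := norm_sub_sq_real x y; linarith

lemma Rinv_congr {q : Fin 7 → E3} {i j k l : Fin 7}
    (h : dist (q i) (q j) = dist (q k) (q l)) : Rinv q i j = Rinv q k l := by
  unfold Rinv; rw [← dist_eq_norm, ← dist_eq_norm, h]

lemma expand3 (u v w : E3) (huu : ⟪u,u⟫ = 1/3) (hvv : ⟪v,v⟫ = 1) (hww : ⟪w,w⟫ = 2/3)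
    (huv : ⟪u,v⟫ = 0) (huw : ⟪u,w⟫ = 0) (hvw : ⟪v,w⟫ = 0) (x : E3) :
    x = (3*⟪u,x⟫) • u + ⟪v,x⟫ • v + ((3/2)*⟪w,x⟫) • w := by
  have h3 : Real.sqrt 3 * Real.sqrt 3 = 3 := Real.mul_self_sqrt (by norm_num)
  have h6 : Real.sqrt 6 * Real.sqrt 6 = 6 := Real.mul_self_sqrt (by norm_num)
  set s3 : ℝ := Real.sqrt 3
  set s6 : ℝ := Real.sqrt 6
  set B : Fin 3 → E3 := ![s3 • u, v, (s6/2) • w] with hB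
  have hvu : ⟪v,u⟫ = 0 := by rw [real_inner_comm]; exact huv
  have hwu : ⟪w,u⟫ = 0 := by rw [real_inner_comm]; exact huw
  have hwv : ⟪w,v⟫ = 0 := by rw [real_inner_comm]; exact hvw
  have e00 : ⟪s3 • u, s3 • u⟫ = 1 := by
    rw [real_inner_smul_left, real_inner_smul_right, huu]; linear_combination (1/3 : ℝ)*h3
  have e01 : ⟪s3 • u, v⟫ = 0 := by rw [real_inner_smul_left, huv]; ring
  have e02 : ⟪s3 • u, (s6/2) • w⟫ = 0 := by
    rw [real_inner_smul_left, real_inner_smul_right, huw]; ring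
  have e10 : ⟪v, s3 • u⟫ = 0 := by rw [real_inner_smul_right, hvu]; ring
  have e12 : ⟪v, (s6/2) • w⟫ = 0 := by rw [real_inner_smul_right, hvw]; ring
  have e20 : ⟪(s6/2) • w, s3 • u⟫ = 0 := by
    rw [real_inner_smul_left, real_inner_smul_right, hwu]; ring
  have e21 : ⟪(s6/2) • w, v⟫ = 0 := by rw [real_inner_smul_left, hwv]; ring
  have e22 : ⟪(s6/2) • w, (s6/2) • w⟫ = 1 := by
    rw [real_inner_smul_left, real_inner_smul_right, hww]; linear_combination (1/6 : ℝ)*h6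
  have hon : Orthonormal ℝ B := by
    rw [orthonormal_iff_ite]
    intro i j
    fin_cases i <;> fin_cases j <;>
      simp only [hB, Fin.zero_eta, Fin.mk_one, Fin.reduceFinMk, Matrix.cons_val_zero,
        Matrix.cons_val_one, Matrix.head_cons, Matrix.cons_val_two, Matrix.tail_cons,
        e00, e01, e02, e10, e12, e20, e21, e22, hvv] <;>
      simp [Fin.ext_iff]
  have hcard : Fintype.card (Fin 3) = Module.finrank ℝ E3 := by
    simp [finrank_euclideanSpace_fin]
  have hsp : ⊤ ≤ Submodule.span ℝ (Set.range B) := by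
    rw [← coe_basisOfOrthonormalOfCardEqFinrank hon hcard]
    exact le_of_eq (Module.Basis.span_eq _).symm
  set ONB : OrthonormalBasis (Fin 3) ℝ E3 := OrthonormalBasis.mk hon hsp with hONB
  have key := ONB.sum_repr' x
  rw [hONB] at key
  simp only [OrthonormalBasis.coe_mk, hB, Fin.sum_univ_three] at key
  simp only [Matrix.cons_val_zero, Matrix.cons_val_one, Matrix.head_cons,
    Matrix.cons_val_two, Matrix.tail_cons, real_inner_smul_left, smul_smul] at key
  have c1 : s3 * ⟪u,x⟫ * s3 = 3*⟪u,x⟫ := by linear_combination ⟪u,x⟫ * h3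
  have c2 : s6 / 2 * ⟪w,x⟫ * (s6 / 2) = (3/2)*⟪w,x⟫ := by linear_combination (⟪w,x⟫/4) * h6
  rw [c1, c2] at key
  exact key.symm


lemma eq_of_sq_eq (x y : ℝ) (hx : 0 ≤ x) (hy : 0 ≤ y) (h : x^2 = y^2) : x = y := by
  nlinarith [h, hx, hy]

set_option maxHeartbeats 2000000 in
/-- For a symmetric configuration in `Ω` with `m₁ = m₂ = m₃` and `m₅ = m₆ = m₇`,
with `b = r₅₆`, one has `f₂₇₅ = b·(f₂₅₁ + f₂₇₁)`. -/
theorem statement12 (q : Fin 7 → E3) (m : Fin 7 → ℝ)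
    (hΩ : InOmega q)
    (hm12 : m 0 = m 1) (hm23 : m 1 = m 2) (hm56 : m 4 = m 5) (hm67 : m 5 = m 6) :
    fval m q 1 6 4 = dist (q 4) (q 5) * (fval m q 1 4 0 + fval m q 1 6 0) := by
  obtain ⟨⟨h1, h2, h3, h4, h5, h6, h7, h8, h9, h10, h11, h12, h13, h14, h15, h16, h17, -⟩,
    -, -, -, -, hdc, had⟩ := hΩ
  -- oriented distance facts
  have k10 : dist (q 1) (q 0) = 1 := by rw [dist_comm]; exact h1
  have k20 : dist (q 2) (q 0) = 1 := by rw [dist_comm]; exact h2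
  have k21 : dist (q 2) (q 1) = 1 := by rw [dist_comm]; exact h3
  have k15 : dist (q 1) (q 5) = dist (q 0) (q 4) := h7.symm
  have k26 : dist (q 2) (q 6) = dist (q 0) (q 4) := (h7.trans h8).symm
  have k06 : dist (q 0) (q 6) = dist (q 0) (q 5) := h13.symm
  have k14 : dist (q 1) (q 4) = dist (q 0) (q 5) := (h13.trans h14).symm
  have k16 : dist (q 1) (q 6) = dist (q 0) (q 5) := (h13.trans (h14.trans h15)).symm
  have k24 : dist (q 2) (q 4) = dist (q 0) (q 5) := (h13.trans (h14.trans (h15.trans h16))).symm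
  have k25 : dist (q 2) (q 5) = dist (q 0) (q 5) :=
    (h13.trans (h14.trans (h15.trans (h16.trans h17)))).symm
  have k43 : dist (q 4) (q 3) = dist (q 3) (q 4) := dist_comm _ _
  have k53 : dist (q 5) (q 3) = dist (q 3) (q 4) := (dist_comm _ _).trans h9.symm
  have k63 : dist (q 6) (q 3) = dist (q 3) (q 4) := (dist_comm _ _).trans (h9.trans h10).symm
  -- translated points
  set p : Fin 7 → E3 := fun i => q i - q 3 with hp
  have hip : ∀ i j : Fin 7, ⟪p i, p j⟫
      = ((dist (q i) (q 3))^2 + (dist (q j) (q 3))^2 - (dist (q i) (q j))^2)/2 := by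
    intro i j
    show ⟪q i - q 3, q j - q 3⟫ = _
    rw [inner_from_norms, ← dist_eq_norm, ← dist_eq_norm, sub_sub_sub_cancel_right,
      ← dist_eq_norm]
  -- the frame
  set G : E3 := (3:ℝ)⁻¹ • (p 0 + p 1 + p 2) with hG
  set u : E3 := p 0 - G with hu
  set w2 : E3 := p 1 - p 2 with hw2
  have huu : ⟪u,u⟫ = 1/3 := by
    simp only [hu, hG, hw2, inner_sub_left, inner_sub_right, inner_add_left, inner_add_right,
      real_inner_smul_left, real_inner_smul_right, hip, dist_self,
      h1, h2, h3, h4, h5, h6, k10, k20, k21]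
    ring
  have hvv : ⟪w2,w2⟫ = 1 := by
    simp only [hu, hG, hw2, inner_sub_left, inner_sub_right, inner_add_left, inner_add_right,
      real_inner_smul_left, real_inner_smul_right, hip, dist_self,
      h1, h2, h3, h4, h5, h6, k10, k20, k21]
    ring
  have hww : ⟪G,G⟫ = 2/3 := by
    simp only [hu, hG, hw2, inner_sub_left, inner_sub_right, inner_add_left, inner_add_right,
      real_inner_smul_left, real_inner_smul_right, hip, dist_self,
      h1, h2, h3, h4, h5, h6, k10, k20, k21]
    ring
  have huv : ⟪u,w2⟫ = 0 := by
    simp only [hu, hG, hw2, inner_sub_left, inner_sub_right, inner_add_left, inner_add_right,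
      real_inner_smul_left, real_inner_smul_right, hip, dist_self,
      h1, h2, h3, h4, h5, h6, k10, k20, k21]
    ring
  have huw : ⟪u,G⟫ = 0 := by
    simp only [hu, hG, hw2, inner_sub_left, inner_sub_right, inner_add_left, inner_add_right,
      real_inner_smul_left, real_inner_smul_right, hip, dist_self,
      h1, h2, h3, h4, h5, h6, k10, k20, k21]
    ring
  have hvw : ⟪w2,G⟫ = 0 := by
    simp only [hu, hG, hw2, inner_sub_left, inner_sub_right, inner_add_left, inner_add_right,
      real_inner_smul_left, real_inner_smul_right, hip, dist_self,
      h1, h2, h3, h4, h5, h6, k10, k20, k21]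
    ring
  -- inner products of the lower triangle with the frame
  have hu4 : ⟪u, p 4⟫ = (dist (q 0) (q 5)^2 - dist (q 0) (q 4)^2)/3 := by
    simp only [hu, hG, hw2, inner_sub_left, inner_add_left, real_inner_smul_left, hip,
      h4, h5, h6, k43, k14, k24]
    ring
  have hv4 : ⟪w2, p 4⟫ = 0 := by
    simp only [hu, hG, hw2, inner_sub_left, inner_add_left, real_inner_smul_left, hip,
      h4, h5, h6, k43, k14, k24]
    ring
  have hG4 : ⟪G, p 4⟫
      = (3 + 3*dist (q 3) (q 4)^2 - dist (q 0) (q 4)^2 - 2*dist (q 0) (q 5)^2)/6 := by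
    simp only [hu, hG, hw2, inner_sub_left, inner_add_left, real_inner_smul_left, hip,
      h4, h5, h6, k43, k14, k24]
    ring
  have hu5 : ⟪u, p 5⟫ = -(dist (q 0) (q 5)^2 - dist (q 0) (q 4)^2)/6 := by
    simp only [hu, hG, hw2, inner_sub_left, inner_add_left, real_inner_smul_left, hip,
      h4, h5, h6, k53, k15, k25]
    ring
  have hv5 : ⟪w2, p 5⟫ = (dist (q 0) (q 5)^2 - dist (q 0) (q 4)^2)/2 := by
    simp only [hu, hG, hw2, inner_sub_left, inner_add_left, real_inner_smul_left, hip,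
      h4, h5, h6, k53, k15, k25]
    ring
  have hG5 : ⟪G, p 5⟫
      = (3 + 3*dist (q 3) (q 4)^2 - dist (q 0) (q 4)^2 - 2*dist (q 0) (q 5)^2)/6 := by
    simp only [hu, hG, hw2, inner_sub_left, inner_add_left, real_inner_smul_left, hip,
      h4, h5, h6, k53, k15, k25]
    ring
  have hu6 : ⟪u, p 6⟫ = -(dist (q 0) (q 5)^2 - dist (q 0) (q 4)^2)/6 := by
    simp only [hu, hG, hw2, inner_sub_left, inner_add_left, real_inner_smul_left, hip,
      h4, h5, h6, k63, k06, k16, k26]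
    ring
  have hv6 : ⟪w2, p 6⟫ = -(dist (q 0) (q 5)^2 - dist (q 0) (q 4)^2)/2 := by
    simp only [hu, hG, hw2, inner_sub_left, inner_add_left, real_inner_smul_left, hip,
      h4, h5, h6, k63, k06, k16, k26]
    ring
  have hG6 : ⟪G, p 6⟫
      = (3 + 3*dist (q 3) (q 4)^2 - dist (q 0) (q 4)^2 - 2*dist (q 0) (q 5)^2)/6 := by
    simp only [hu, hG, hw2, inner_sub_left, inner_add_left, real_inner_smul_left, hip,
      h4, h5, h6, k63, k06, k16, k26]
    ring
  -- expansions of the lower triangle in the frame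
  have hp4c : p 4 = (dist (q 0) (q 5)^2 - dist (q 0) (q 4)^2) • u
      + ((3 + 3*dist (q 3) (q 4)^2 - dist (q 0) (q 4)^2 - 2*dist (q 0) (q 5)^2)/4) • G := by
    have h := expand3 u w2 G huu hvv hww huv huw hvw (p 4)
    rw [hu4, hv4, hG4] at h
    rw [h]; module
  have hp5c : p 5 = (-(dist (q 0) (q 5)^2 - dist (q 0) (q 4)^2)/2) • u
      + ((dist (q 0) (q 5)^2 - dist (q 0) (q 4)^2)/2) • w2
      + ((3 + 3*dist (q 3) (q 4)^2 - dist (q 0) (q 4)^2 - 2*dist (q 0) (q 5)^2)/4) • G := by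
    have h := expand3 u w2 G huu hvv hww huv huw hvw (p 5)
    rw [hu5, hv5, hG5] at h
    rw [h]; module
  have hp6c : p 6 = (-(dist (q 0) (q 5)^2 - dist (q 0) (q 4)^2)/2) • u
      + (-(dist (q 0) (q 5)^2 - dist (q 0) (q 4)^2)/2) • w2
      + ((3 + 3*dist (q 3) (q 4)^2 - dist (q 0) (q 4)^2 - 2*dist (q 0) (q 5)^2)/4) • G := by
    have h := expand3 u w2 G huu hvv hww huv huw hvw (p 6)
    rw [hu6, hv6, hG6] at h
    rw [h]; module
  set KK : ℝ := dist (q 0) (q 5)^2 - dist (q 0) (q 4)^2 with hKK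
  set TT : ℝ := (3 + 3*dist (q 3) (q 4)^2 - dist (q 0) (q 4)^2 - 2*dist (q 0) (q 5)^2)/4 with hTT
  -- b = K
  have hKpos : 0 ≤ KK := by
    have hac : dist (q 0) (q 4) ≤ dist (q 0) (q 5) := (had.trans hdc).le
    have h2 := pow_le_pow_left₀ (dist_nonneg (x := q 0) (y := q 4)) hac 2
    linarith [h2]
  have hvu : ⟪w2,u⟫ = 0 := by rw [real_inner_comm]; exact huv
  have hbK : dist (q 4) (q 5) = KK := by
    have h45 : q 4 - q 5 = ((3/2) * KK) • u
        - (KK/2) • w2 := by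
      have e : q 4 - q 5 = p 4 - p 5 := by show _ = (q 4 - q 3) - (q 5 - q 3); abel
      rw [e, hp4c, hp5c]; module
    have hb2 : dist (q 4) (q 5)^2 = KK^2 := by
      rw [dist_eq_norm, ← real_inner_self_eq_norm_sq, h45]
      simp only [inner_sub_left, inner_sub_right, real_inner_smul_left, real_inner_smul_right,
        huu, hvv, huv, hvw, huw, hvu]
      ring
    exact eq_of_sq_eq _ _ (dist_nonneg (x := q 4) (y := q 5)) hKpos hb2
  -- componentwise coordinates
  have happ : ∀ (x y : E3) (l : Fin 3), (x - y) l = x l - y l := fun _ _ _ => rfl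
  have haddapp : ∀ (x y : E3) (l : Fin 3), (x + y) l = x l + y l := fun _ _ _ => rfl
  have hsapp : ∀ (c : ℝ) (x : E3) (l : Fin 3), (c • x) l = c * x l := fun _ _ _ => rfl
  have hpapp : ∀ (i : Fin 7) (l : Fin 3), p i l = q i l - q 3 l := fun _ _ => rfl
  have hc0 : ∀ l : Fin 3, q 0 l = q 3 l + (u l + G l) := by
    intro l
    have h := congrArg (fun z : E3 => z l) hu
    simp only [happ, haddapp, hsapp, hpapp] at h
    linear_combination -h
  have hc1 : ∀ l : Fin 3, q 1 l = q 3 l + (-(1/2) * u l + (1/2) * w2 l + G l) := by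
    intro l
    have hh := congrArg (fun z : E3 => z l) hu
    have hh2 := congrArg (fun z : E3 => z l) hw2
    have hh3 := congrArg (fun z : E3 => z l) hG
    simp only [happ, haddapp, hsapp, hpapp] at hh hh2 hh3
    linear_combination (1/2 : ℝ) * hh + (-(1/2) : ℝ) * hh2 + (-(3/2) : ℝ) * hh3
  have hc2 : ∀ l : Fin 3, q 2 l = q 3 l + (-(1/2) * u l - (1/2) * w2 l + G l) := by
    intro l
    have hh := congrArg (fun z : E3 => z l) hu
    have hh2 := congrArg (fun z : E3 => z l) hw2
    have hh3 := congrArg (fun z : E3 => z l) hG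
    simp only [happ, haddapp, hsapp, hpapp] at hh hh2 hh3
    linear_combination (1/2 : ℝ) * hh + ((1/2) : ℝ) * hh2 + (-(3/2) : ℝ) * hh3
  have hc4 : ∀ l : Fin 3, q 4 l = q 3 l + (KK * u l
      + TT * G l) := by
    intro l
    have h := congrArg (fun z : E3 => z l) hp4c
    simp only [happ, haddapp, hsapp, hpapp] at h
    linear_combination h
  have hc5 : ∀ l : Fin 3, q 5 l = q 3 l + ((-KK/2) * u l
      + (KK/2) * w2 l
      + TT * G l) := by
    intro l
    have h := congrArg (fun z : E3 => z l) hp5c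
    simp only [happ, haddapp, hsapp, hpapp] at h
    linear_combination h
  have hc6 : ∀ l : Fin 3, q 6 l = q 3 l + ((-KK/2) * u l
      + (-KK/2) * w2 l
      + TT * G l) := by
    intro l
    have h := congrArg (fun z : E3 => z l) hp6c
    simp only [happ, haddapp, hsapp, hpapp] at h
    linear_combination h
  -- the five determinant identities
  have I1 : Delta q 1 6 4 0 = KK * Delta q 1 4 0 2 := by
    simp only [Delta, det3, Matrix.det_fin_three]
    simp only [Matrix.of_apply, Matrix.cons_val', Matrix.cons_val_zero, Matrix.cons_val_one,
      Matrix.head_cons, Matrix.empty_val', Matrix.cons_val_fin_one, Matrix.head_fin_const,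
      Matrix.cons_val_two, Matrix.tail_cons, happ]
    simp only [hc0, hc1, hc2, hc4, hc5, hc6]
    ring
  have I2 : Delta q 1 6 4 2 = KK * Delta q 1 6 0 2 := by
    simp only [Delta, det3, Matrix.det_fin_three]
    simp only [Matrix.of_apply, Matrix.cons_val', Matrix.cons_val_zero, Matrix.cons_val_one,
      Matrix.head_cons, Matrix.empty_val', Matrix.cons_val_fin_one, Matrix.head_fin_const,
      Matrix.cons_val_two, Matrix.tail_cons, happ]
    simp only [hc0, hc1, hc2, hc4, hc5, hc6]
    ring
  have I3 : Delta q 1 6 4 3 = KK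
      * (Delta q 1 4 0 3 + Delta q 1 6 0 3) := by
    simp only [Delta, det3, Matrix.det_fin_three]
    simp only [Matrix.of_apply, Matrix.cons_val', Matrix.cons_val_zero, Matrix.cons_val_one,
      Matrix.head_cons, Matrix.empty_val', Matrix.cons_val_fin_one, Matrix.head_fin_const,
      Matrix.cons_val_two, Matrix.tail_cons, happ]
    simp only [hc0, hc1, hc2, hc4, hc5, hc6]
    ring
  have I4 : Delta q 1 6 4 5 = KK
      * (Delta q 1 4 0 5 + Delta q 1 6 0 5) := by
    simp only [Delta, det3, Matrix.det_fin_three]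
    simp only [Matrix.of_apply, Matrix.cons_val', Matrix.cons_val_zero, Matrix.cons_val_one,
      Matrix.head_cons, Matrix.empty_val', Matrix.cons_val_fin_one, Matrix.head_fin_const,
      Matrix.cons_val_two, Matrix.tail_cons, happ]
    simp only [hc0, hc1, hc2, hc4, hc5, hc6]
    ring
  have I5 : Delta q 1 4 0 6 = - Delta q 1 6 0 4 := by
    simp only [Delta, det3, Matrix.det_fin_three]
    simp only [Matrix.of_apply, Matrix.cons_val', Matrix.cons_val_zero, Matrix.cons_val_one,
      Matrix.head_cons, Matrix.empty_val', Matrix.cons_val_fin_one, Matrix.head_fin_const,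
      Matrix.cons_val_two, Matrix.tail_cons, happ]
    simp only [hc0, hc1, hc2, hc4, hc5, hc6]
    ring
  -- Rinv reductions
  have R12 : Rinv q 1 2 = Rinv q 1 0 := Rinv_congr (h3.trans k10.symm)
  have R13 : Rinv q 1 3 = Rinv q 1 0 := Rinv_congr (h5.trans k10.symm)
  have R62 : Rinv q 6 2 = Rinv q 1 5 := Rinv_congr ((dist_comm (q 6) (q 2)).trans
    (k26.trans k15.symm))
  have R45 : Rinv q 4 5 = Rinv q 6 5 := Rinv_congr (h11.trans (dist_comm (q 5) (q 6)))
  have R46 : Rinv q 4 6 = Rinv q 6 5 := Rinv_congr (h12.symm.trans (dist_comm (q 5) (q 6)))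
  have R64 : Rinv q 6 4 = Rinv q 6 5 := Rinv_congr ((dist_comm (q 6) (q 4)).trans
    (h12.symm.trans (dist_comm (q 5) (q 6))))
  have R42 : Rinv q 4 2 = Rinv q 6 0 := Rinv_congr ((dist_comm (q 4) (q 2)).trans
    (k24.trans (k06.symm.trans (dist_comm (q 0) (q 6)))))
  have R16 : Rinv q 1 6 = Rinv q 6 0 := Rinv_congr (k16.trans
    (k06.symm.trans (dist_comm (q 0) (q 6))))
  have R14 : Rinv q 1 4 = Rinv q 6 0 := Rinv_congr (k14.trans
    (k06.symm.trans (dist_comm (q 0) (q 6))))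
  have R43 : Rinv q 4 3 = Rinv q 6 3 := Rinv_congr (k43.trans k63.symm)
  -- expand the sums
  have F1 : fval m q 1 6 4 = m 0 * (Rinv q 1 0 - Rinv q 6 0) * Delta q 1 6 4 0
      + m 2 * (Rinv q 1 2 - Rinv q 6 2) * Delta q 1 6 4 2
      + m 3 * (Rinv q 1 3 - Rinv q 6 3) * Delta q 1 6 4 3
      + m 5 * (Rinv q 1 5 - Rinv q 6 5) * Delta q 1 6 4 5 := by
    rw [fval, show (Finset.univ \ ({1,6,4} : Finset (Fin 7))) = ({0,2,3,5} : Finset (Fin 7))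
      from by decide]
    rw [show ({0,2,3,5} : Finset (Fin 7)) = insert 0 (insert 2 (insert 3 {5})) from rfl]
    rw [Finset.sum_insert (by decide), Finset.sum_insert (by decide),
      Finset.sum_insert (by decide), Finset.sum_singleton]
    ring
  have F2 : fval m q 1 4 0 = m 2 * (Rinv q 1 2 - Rinv q 4 2) * Delta q 1 4 0 2
      + m 3 * (Rinv q 1 3 - Rinv q 4 3) * Delta q 1 4 0 3
      + m 5 * (Rinv q 1 5 - Rinv q 4 5) * Delta q 1 4 0 5
      + m 6 * (Rinv q 1 6 - Rinv q 4 6) * Delta q 1 4 0 6 := by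
    rw [fval, show (Finset.univ \ ({1,4,0} : Finset (Fin 7))) = ({2,3,5,6} : Finset (Fin 7))
      from by decide]
    rw [show ({2,3,5,6} : Finset (Fin 7)) = insert 2 (insert 3 (insert 5 {6})) from rfl]
    rw [Finset.sum_insert (by decide), Finset.sum_insert (by decide),
      Finset.sum_insert (by decide), Finset.sum_singleton]
    ring
  have F3 : fval m q 1 6 0 = m 2 * (Rinv q 1 2 - Rinv q 6 2) * Delta q 1 6 0 2
      + m 3 * (Rinv q 1 3 - Rinv q 6 3) * Delta q 1 6 0 3
      + m 4 * (Rinv q 1 4 - Rinv q 6 4) * Delta q 1 6 0 4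
      + m 5 * (Rinv q 1 5 - Rinv q 6 5) * Delta q 1 6 0 5 := by
    rw [fval, show (Finset.univ \ ({1,6,0} : Finset (Fin 7))) = ({2,3,4,5} : Finset (Fin 7))
      from by decide]
    rw [show ({2,3,4,5} : Finset (Fin 7)) = insert 2 (insert 3 (insert 4 {5})) from rfl]
    rw [Finset.sum_insert (by decide), Finset.sum_insert (by decide),
      Finset.sum_insert (by decide), Finset.sum_singleton]
    ring
  have hm2 : m 2 = m 0 := (hm12.trans hm23).symm
  have hm5 : m 5 = m 4 := hm56.symm
  have hm6 : m 6 = m 4 := (hm56.trans hm67).symm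
  rw [F1, F2, F3, hbK, R12, R13, R62, R45, R46, R64, R42, R16, R14, R43, hm2, hm5, hm6]
  linear_combination m 0 * (Rinv q 1 0 - Rinv q 6 0) * I1
    + m 0 * (Rinv q 1 0 - Rinv q 1 5) * I2
    + m 3 * (Rinv q 1 0 - Rinv q 6 3) * I3
    + m 4 * (Rinv q 1 5 - Rinv q 6 5) * I4
    + KK * m 4 * (Rinv q 6 5 - Rinv q 6 0) * I5
end
end

section
/- Let A be a 3×3 real matrix whose entries satisfy A₁₁ < 0, A₁₂ > 0, A₁₃ < 0, A₂₁ < 0, A₂₂ > 0, A₃₁ < 0, A₃₂ = 0, A₃₃ > 0. If x ∈ ℝ³ is a nonzero vector with A x = 0, then the three components of x are either all strictly positive or all strictly negative. -/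
noncomputable section

open Finset

/-- If a real `3×3` matrix `A` has sign pattern
`(− + −; − + ∗; − 0 +)` and `x ≠ 0` satisfies `A x = 0`, then the components of `x`
are either all strictly positive or all strictly negative. -/
theorem statement15 (A : Matrix (Fin 3) (Fin 3) ℝ)
    (h11 : A 0 0 < 0) (h12 : 0 < A 0 1) (h13 : A 0 2 < 0)
    (h21 : A 1 0 < 0) (h22 : 0 < A 1 1)
    (h31 : A 2 0 < 0) (h32 : A 2 1 = 0) (h33 : 0 < A 2 2)
    (x : Fin 3 → ℝ) (hx : x ≠ 0) (hAx : A.mulVec x = 0) :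
    (∀ i, 0 < x i) ∨ (∀ i, x i < 0) := by
  have e0 := congrFun hAx 0
  have e2 := congrFun hAx 2
  simp [Matrix.mulVec, dotProduct, Fin.sum_univ_three, h32] at e0 e2
  have hx0 : x 0 ≠ 0 := by
    intro h0
    have hx2 : x 2 = 0 := by
      rw [h0] at e2
      have := mul_eq_zero.mp (by linarith : A 2 2 * x 2 = 0)
      rcases this with h | h
      · exact absurd h (ne_of_gt h33)
      · exact h
    have hx1 : x 1 = 0 := by
      rw [h0, hx2] at e0
      have := mul_eq_zero.mp (by linarith : A 0 1 * x 1 = 0)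
      rcases this with h | h
      · exact absurd h (ne_of_gt h12)
      · exact h
    apply hx; funext i; fin_cases i <;> simp [h0, hx1, hx2]
  rcases lt_or_gt_of_ne hx0 with h | h
  · right
    have hx2 : x 2 < 0 := by nlinarith [mul_pos_of_neg_of_neg h31 h]
    have hx1 : x 1 < 0 := by
      nlinarith [mul_pos_of_neg_of_neg h11 h, mul_pos_of_neg_of_neg h13 hx2]
    intro i; fin_cases i <;> assumption
  · left
    have hx2 : 0 < x 2 := by nlinarith [mul_neg_of_neg_of_pos h31 h]
    have hx1 : 0 < x 1 := by
      nlinarith [mul_neg_of_neg_of_pos h11 h, mul_neg_of_neg_of_pos h13 hx2]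
    intro i; fin_cases i <;> assumption
end
end
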